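/- arXiv:0805.1147 — 5 statements merged into one kernel-verified Lean document; each statement's English description precedes it below -/
import Mathlib

section
/- Let A be a cellular algebra over a field R with cell datum (Λ⁺, T, C, *). For λ ∈ Λ⁺ and μ ∈ Λ⁺₀ (i.e., L^μ ≠ 0), the multiplicity of the right simple module L^μ in a composition series of the right standard module W^λ equals the multiplicity of the left simple module ᶠL^μ in a composition series of the left standard module ᶠW^λ. -/
open MulOpposite

noncomputable section

universe u

section CompFactors

variable (A : Type u) [Ring A]

/-- The `i`-th factor of a series of submodules. -/
abbrev CompSeriesFactor {M : Type u} [AddCommGroup M] [Module A M]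
    (s : CompositionSeries (Submodule A M)) (i : Fin s.length) : Type u :=
  ↥(s i.succ) ⧸ Submodule.comap (s i.succ).subtype (s i.castSucc)

open Classical in
/-- The multiplicity of `N` among the composition factors of `M` (returning `0` if `M`
has no composition series); by the Jordan–Hölder theorem this does not depend on the
choice of composition series. -/
def compMult (M : Type u) [AddCommGroup M] [Module A M]
    (N : Type u) [AddCommGroup N] [Module A N] : ℕ :=
  if h : ∃ s : CompositionSeries (Submodule A M), s.head = ⊥ ∧ s.last = ⊤ then
    (Finset.univ.filter fun i : Fin h.choose.length =>
      Nonempty (CompSeriesFactor A h.choose i ≃ₗ[A] N)).card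
  else 0

/-- `N` is (isomorphic to) a composition factor, i.e. a simple subquotient, of `M`. -/
def IsCompFactor (M N : Type u) [AddCommGroup M] [Module A M]
    [AddCommGroup N] [Module A N] : Prop :=
  ∃ p q : Submodule A M, p ≤ q ∧
    IsSimpleModule A (↥q ⧸ Submodule.comap q.subtype p) ∧
    Nonempty ((↥q ⧸ Submodule.comap q.subtype p) ≃ₗ[A] N)

/-- `M₁` and `M₂` have a common composition factor. -/
def ShareFactor (M₁ M₂ : Type u) [AddCommGroup M₁] [Module A M₁]
    [AddCommGroup M₂] [Module A M₂] : Prop :=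
  ∃ (p q : Submodule A M₁) (p' q' : Submodule A M₂), p ≤ q ∧ p' ≤ q' ∧
    IsSimpleModule A (↥q ⧸ Submodule.comap q.subtype p) ∧
    Nonempty ((↥q ⧸ Submodule.comap q.subtype p) ≃ₗ[A]
      (↥q' ⧸ Submodule.comap q'.subtype p'))

/-- `e` is a primitive central idempotent (a block idempotent) of `A`. -/
def IsPrimCentralIdem (e : A) : Prop :=
  IsIdempotentElem e ∧ e ∈ Set.center A ∧ e ≠ 0 ∧
    ∀ f g : A, IsIdempotentElem f → IsIdempotentElem g → f ∈ Set.center A →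
      g ∈ Set.center A → f * g = 0 → e = f + g → f = 0 ∨ g = 0

/-- A module belongs to the block of the central idempotent `e` when `e` acts as
the identity on it. -/
def InBlock (e : A) (M : Type u) [AddCommGroup M] [Module A M] : Prop :=
  ∀ m : M, e • m = m

/-- `P` is a projective cover of `L`. -/
def IsProjCover (P L : Type u) [AddCommGroup P] [Module A P]
    [AddCommGroup L] [Module A L] : Prop :=
  Module.Projective A P ∧ ∃ f : P →ₗ[A] L, Function.Surjective f ∧
    ∀ N : Submodule A P, N ⊔ LinearMap.ker f = ⊤ → N = ⊤

end CompFactors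

/-- The bilinear form on `ι → R` induced by a matrix `φ`. -/
def formSum {R ι : Type u} [CommRing R] [Fintype ι] (φ : ι → ι → R) (x y : ι → R) : R :=
  ∑ s, ∑ t, x s * φ s t * y t

section Cellular

variable (R A : Type u) [CommRing R] [Ring A] [Algebra R A]
variable (Λp : Type u) [PartialOrder Λp] (T : Λp → Type u) [∀ l, Fintype (T l)]

/-- A cell datum (Graham–Lehrer) for the `R`-algebra `A`: a cellular basis
`c l s t` indexed by pairs of elements of `T l` for `l` in the poset `Λp`, an
anti-automorphism `star` swapping the two indices, and structure constants
`coeff` for right multiplication, acting on the second index modulo higher terms. -/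
structure CellDatum where
  c : ∀ l, T l → T l → A
  basis : Module.Basis ((l : Λp) × (T l × T l)) R A
  basis_eq : ∀ l s t, basis ⟨l, (s, t)⟩ = c l s t
  star : A →ₗ[R] A
  star_mul : ∀ a b, star (a * b) = star b * star a
  star_c : ∀ l s t, star (c l s t) = c l t s
  coeff : ∀ l, T l → A → T l → R
  mul_rule : ∀ (l) (s t : T l) (a : A),
    c l s t * a - ∑ v, coeff l t a v • c l s v ∈
      Submodule.span R {x : A | ∃ l' s' t', l < l' ∧ x = c l' s' t'}

variable {R A Λp T}

namespace CellDatum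

variable (D : CellDatum R A Λp T)

/-- The span of the cellular basis elements with index strictly above `l`. -/
def Aup (l : Λp) : Submodule R A :=
  Submodule.span R {x : A | ∃ l' s' t', l < l' ∧ x = D.c l' s' t'}

/-- The span of the cellular basis elements with index in `P`. -/
def cellSpan (P : Set Λp) : Submodule R A :=
  Submodule.span R {x : A | ∃ l s t, l ∈ P ∧ x = D.c l s t}

/-- The data of right standard (cell) modules: each `T l → R` is a right `A`-module
(i.e. a module over `Aᵐᵒᵖ`), the action is `R`-bilinear, and on the standard basis it is
given by the structure constants of the cell datum. -/
def RightStd [∀ l, DecidableEq (T l)] [∀ l, Module Aᵐᵒᵖ (T l → R)] : Prop :=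
  (∀ (l : Λp) (r : R) (a : Aᵐᵒᵖ) (x : T l → R), a • (r • x) = r • (a • x)) ∧
  (∀ (l : Λp) (t : T l) (a : A),
    (op a) • (Pi.single t 1 : T l → R) = fun v => D.coeff l t a v)

/-- The data of left standard (cell) modules. -/
def LeftStd [∀ l, DecidableEq (T l)] [∀ l, Module A (T l → R)] : Prop :=
  (∀ (l : Λp) (r : R) (a : A) (x : T l → R), a • (r • x) = r • (a • x)) ∧
  (∀ (l : Λp) (t : T l) (a : A),
    a • (Pi.single t 1 : T l → R) = fun v => D.coeff l t (D.star a) v)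

/-- `φ` is the matrix of the canonical bilinear form on the standard modules:
`c l u s * c l t v ≡ φ l s t • c l u v` modulo `A^{∨l}`. -/
def FormData (φ : ∀ l, T l → T l → R) : Prop :=
  ∀ (l : Λp) (s t u v : T l), D.c l u s * D.c l t v - φ l s t • D.c l u v ∈ D.Aup l

section Idem

variable {Λt M X : Type u} [PartialOrder Λt] [PartialOrder X] [Fintype M]

/-- Assumptions (A1)–(A4): `ι : Λp → Λt` realizes the cell poset inside the
bigger poset `Λt`, `κ : M → Λt` realizes the index set of the orthogonal idempotent
decomposition `1 = ∑ e μ`, each `e μ` lies in the span of the `c l s t` with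
`ι l ≥ κ μ`, and every column of the cellular basis is fixed by some `e μ`. -/
structure IdemData (ι : Λp → Λt) (κ : M → Λt) (e : M → A) : Prop where
  order_iff : ∀ l l', ι l ≤ ι l' ↔ l ≤ l'
  kappa_inj : Function.Injective κ
  ne_zero : ∀ μ, e μ ≠ 0
  idem : ∀ μ, e μ * e μ = e μ
  orth : ∀ μ ν, μ ≠ ν → e μ * e ν = 0
  sum_one : ∑ μ, e μ = 1
  mem_span : ∀ μ, e μ ∈ Submodule.span R {x : A | ∃ l s t, κ μ ≤ ι l ∧ x = D.c l s t}
  exists_idem : ∀ (l) (t : T l), ∃ μ, (∀ s, D.c l s t * e μ = D.c l s t) ∧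
    (∀ u, e μ * D.c l t u = D.c l t u)

/-- `T(λ,μ)`: the indices `t` whose column (resp. row) of the cellular basis is fixed
by right (resp. left) multiplication by `e μ`. -/
def Tset (e : M → A) (l : Λp) (μ : M) : Set (T l) :=
  {t | (∀ s, D.c l s t * e μ = D.c l s t) ∧ (∀ u, e μ * D.c l t u = D.c l t u)}

/-- `T⁺_α(λ)`. -/
def Tplus (e : M → A) (ι : Λp → Λt) (κ : M → Λt) (α : Λt → X) (l : Λp) : Set (T l) :=
  {t | ∃ μ, t ∈ D.Tset e l μ ∧ α (ι l) = α (κ μ)}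

/-- `T⁻_α(λ)`. -/
def Tminus (e : M → A) (ι : Λp → Λt) (κ : M → Λt) (α : Λt → X) (l : Λp) : Set (T l) :=
  {t | ∃ μ, t ∈ D.Tset e l μ ∧ α (κ μ) < α (ι l)}

/-- `I(λ,ε)`: `T⁺_α(λ)` for `ε = false` and `T⁻_α(λ)` for `ε = true`. -/
def Iset (e : M → A) (ι : Λp → Λt) (κ : M → Λt) (α : Λt → X) (l : Λp) : Bool → Set (T l)
  | false => D.Tplus e ι κ α l
  | true => D.Tminus e ι κ α l

/-- `J̃(λ,ε)`: `T⁺_α(λ)` for `ε = false` and all of `T(λ)` for `ε = true`. -/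
def Jset (e : M → A) (ι : Λp → Λt) (κ : M → Λt) (α : Λt → X) (l : Λp) : Bool → Set (T l)
  | false => D.Tplus e ι κ α l
  | true => Set.univ

/-- The Levi type subalgebra `A^α` (as a submodule). -/
def levi (e : M → A) (ι : Λp → Λt) (κ : M → Λt) (α : Λt → X) : Submodule R A :=
  Submodule.span R {x : A | ∃ l ε s t, s ∈ D.Iset e ι κ α l ε ∧ t ∈ D.Iset e ι κ α l ε ∧
    x = D.c l s t}

/-- The parabolic type subalgebra `Ã^α` (as a submodule). -/
def parab (e : M → A) (ι : Λp → Λt) (κ : M → Λt) (α : Λt → X) : Submodule R A :=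
  Submodule.span R {x : A | ∃ l ε s t, s ∈ D.Iset e ι κ α l ε ∧ t ∈ D.Jset e ι κ α l ε ∧
    x = D.c l s t}

/-- The span of the elements of the cellular basis of `A^α` of index strictly
above `(l,ε)` in `Ω`. -/
def upperOm (e : M → A) (ι : Λp → Λt) (κ : M → Λt) (α : Λt → X) (p : Λp × Bool) :
    Submodule R A :=
  Submodule.span R {x : A | ∃ (q : Λp × Bool) (s t : T q.1),
    ((p.2 < q.2) ∨ (p.2 = q.2 ∧ p.1 < q.1)) ∧
    s ∈ D.Iset e ι κ α q.1 q.2 ∧ t ∈ D.Iset e ι κ α q.1 q.2 ∧ x = D.c q.1 s t}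

/-- The span of the elements of the standard basis of `Ã^α` of index strictly
above `(l,ε)` in `Ω`. -/
def upperOmParab (e : M → A) (ι : Λp → Λt) (κ : M → Λt) (α : Λt → X) (p : Λp × Bool) :
    Submodule R A :=
  Submodule.span R {x : A | ∃ (q : Λp × Bool) (s t : T q.1),
    ((p.2 < q.2) ∨ (p.2 = q.2 ∧ p.1 < q.1)) ∧
    s ∈ D.Iset e ι κ α q.1 q.2 ∧ t ∈ D.Jset e ι κ α q.1 q.2 ∧ x = D.c q.1 s t}

end Idem

end CellDatum

end Cellular

/-! ### Auxiliary transfer machinery -/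

section Transfer

variable {A B : Type u} [Ring A] [Ring B]
variable {M M' : Type u} [AddCommGroup M] [AddCommGroup M'] [Module A M] [Module B M']

theorem tx_hg_symm {F F' : Type u} [AddCommGroup F] [AddCommGroup F']
    [Module A F] [Module B F'] (σ : A ≃+* B) (g : F ≃+ F')
    (hg : ∀ (a : A) (x : F), g (a • x) = σ a • g x) :
    ∀ (b : B) (y : F'), g.symm (b • y) = σ.symm b • g.symm y := by
  intro b y
  apply g.injective
  rw [g.apply_symm_apply, hg, RingEquiv.apply_symm_apply, g.apply_symm_apply]

/-- Transfer of submodules along a ring-equivalence-compatible additive equivalence. -/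
def txSub (σ : A ≃+* B) (g : M ≃+ M') (hg : ∀ (a : A) (x : M), g (a • x) = σ a • g x)
    (p : Submodule A M) : Submodule B M' where
  carrier := ⇑g '' p
  add_mem' := by
    rintro _ _ ⟨x, hx, rfl⟩ ⟨y, hy, rfl⟩
    exact ⟨x + y, p.add_mem hx hy, map_add g x y⟩
  zero_mem' := ⟨0, p.zero_mem, map_zero g⟩
  smul_mem' := by
    rintro b _ ⟨x, hx, rfl⟩
    exact ⟨σ.symm b • x, p.smul_mem _ hx, by rw [hg, RingEquiv.apply_symm_apply]⟩

theorem mem_txSub (σ : A ≃+* B) (g : M ≃+ M') (hg : ∀ (a : A) (x : M), g (a • x) = σ a • g x)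
    (p : Submodule A M) {y : M'} : y ∈ txSub σ g hg p ↔ g.symm y ∈ p := by
  constructor
  · rintro ⟨x, hx, rfl⟩; simpa using hx
  · intro h; exact ⟨g.symm y, h, g.apply_symm_apply y⟩

/-- Transfer of submodules as an order isomorphism. -/
def txOrd (σ : A ≃+* B) (g : M ≃+ M') (hg : ∀ (a : A) (x : M), g (a • x) = σ a • g x) :
    Submodule A M ≃o Submodule B M' where
  toFun := txSub σ g hg
  invFun := txSub σ.symm g.symm (tx_hg_symm σ g hg)
  left_inv p := by
    ext x
    rw [mem_txSub, mem_txSub]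
    simp
  right_inv q := by
    ext y
    rw [mem_txSub, mem_txSub]
    simp
  map_rel_iff' := by
    intro p q
    constructor
    · intro h x hx
      have h2 : g x ∈ txSub σ g hg q := h ⟨x, hx, rfl⟩
      rw [mem_txSub] at h2
      simpa using h2
    · intro h
      rintro _ ⟨x, hx, rfl⟩
      exact ⟨x, h hx, rfl⟩

/-- Transfer of a composition series of submodules. -/
def txSeries (σ : A ≃+* B) (g : M ≃+ M') (hg : ∀ (a : A) (x : M), g (a • x) = σ a • g x)
    (s : CompositionSeries (Submodule A M)) : CompositionSeries (Submodule B M') where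
  length := s.length
  toFun := fun i => txOrd σ g hg (s i)
  step := fun i => (apply_covBy_apply_iff (txOrd σ g hg)).2 (s.step i)

/-- Transfer of the subtype of a submodule. -/
def txSubEquiv (σ : A ≃+* B) (g : M ≃+ M') (hg : ∀ (a : A) (x : M), g (a • x) = σ a • g x)
    (q : Submodule A M) : ↥q ≃+ ↥(txSub σ g hg q) where
  toFun x := ⟨g (x : M), ⟨(x : M), x.2, rfl⟩⟩
  invFun y := ⟨g.symm (y : M'), (mem_txSub σ g hg q).1 y.2⟩
  left_inv x := Subtype.ext (g.symm_apply_apply (x : M))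
  right_inv y := Subtype.ext (g.apply_symm_apply (y : M'))
  map_add' x y := Subtype.ext (map_add g (x : M) (y : M))

theorem txSubEquiv_smul (σ : A ≃+* B) (g : M ≃+ M')
    (hg : ∀ (a : A) (x : M), g (a • x) = σ a • g x) (q : Submodule A M)
    (a : A) (x : ↥q) : txSubEquiv σ g hg q (a • x) = σ a • txSubEquiv σ g hg q x :=
  Subtype.ext (hg a x)

/-- Additive equivalence of quotients by corresponding submodules (over possibly different
rings). -/
def txQuot {G G' : Type u} [AddCommGroup G] [AddCommGroup G'] [Module A G] [Module B G']
    (p : Submodule A G) (q : Submodule B G') (e : G ≃+ G')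
    (h : ∀ x, x ∈ p ↔ e x ∈ q) : (G ⧸ p) ≃+ (G' ⧸ q) where
  toFun := Quotient.map' e (fun a b hab => by
    rw [Submodule.quotientRel_def] at hab ⊢
    rw [← map_sub]
    exact (h _).1 hab)
  invFun := Quotient.map' e.symm (fun a b hab => by
    rw [Submodule.quotientRel_def] at hab ⊢
    apply (h _).2
    rwa [map_sub, e.apply_symm_apply, e.apply_symm_apply])
  left_inv := fun z => Quotient.inductionOn' z fun x => by
    simp [Quotient.map'_mk'']
  right_inv := fun z => Quotient.inductionOn' z fun x => by
    simp [Quotient.map'_mk'']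
  map_add' := fun z w => Quotient.inductionOn₂' z w fun x y => by
    show (Submodule.Quotient.mk (e (x + y)) : G' ⧸ q) =
      Submodule.Quotient.mk (e x) + Submodule.Quotient.mk (e y)
    rw [map_add, Submodule.Quotient.mk_add]

theorem txQuot_mk {G G' : Type u} [AddCommGroup G] [AddCommGroup G'] [Module A G] [Module B G']
    (p : Submodule A G) (q : Submodule B G') (e : G ≃+ G')
    (h : ∀ x, x ∈ p ↔ e x ∈ q) (x : G) :
    txQuot p q e h (Submodule.Quotient.mk x) = Submodule.Quotient.mk (e x) := rfl

theorem txQuot_smul {G G' : Type u} [AddCommGroup G] [AddCommGroup G'] [Module A G] [Module B G']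
    (σ : A ≃+* B) (p : Submodule A G) (q : Submodule B G') (e : G ≃+ G')
    (he : ∀ (a : A) (x : G), e (a • x) = σ a • e x)
    (h : ∀ x, x ∈ p ↔ e x ∈ q) (a : A) (z : G ⧸ p) :
    txQuot p q e h (a • z) = σ a • txQuot p q e h z := by
  refine Quotient.inductionOn' z fun x => ?_
  have hx : (Quotient.mk'' x : G ⧸ p) = Submodule.Quotient.mk x :=
    Submodule.Quotient.mk''_eq_mk x
  rw [hx, ← Submodule.Quotient.mk_smul, txQuot_mk, txQuot_mk, he,
    Submodule.Quotient.mk_smul]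

/-- Transfer of a linear equivalence across a ring equivalence. -/
def txLin {F F' N N' : Type u} [AddCommGroup F] [AddCommGroup F'] [AddCommGroup N]
    [AddCommGroup N'] [Module A F] [Module B F'] [Module A N] [Module B N']
    (σ : A ≃+* B) (e : F ≃+ F') (he : ∀ (a : A) (x : F), e (a • x) = σ a • e x)
    (n : N ≃+ N') (hn : ∀ (a : A) (x : N), n (a • x) = σ a • n x)
    (f : F ≃ₗ[A] N) : F' ≃ₗ[B] N' :=
  AddEquiv.toLinearEquiv ((e.symm.trans f.toAddEquiv).trans n) (by
    intro b x
    show n (f.toAddEquiv (e.symm (b • x))) = b • n (f.toAddEquiv (e.symm x))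
    rw [tx_hg_symm σ e he,
      show f.toAddEquiv (σ.symm b • e.symm x) = σ.symm b • f.toAddEquiv (e.symm x)
        from map_smul f _ _,
      hn, RingEquiv.apply_symm_apply])

theorem txNonemptyIff {F F' N N' : Type u} [AddCommGroup F] [AddCommGroup F'] [AddCommGroup N]
    [AddCommGroup N'] [Module A F] [Module B F'] [Module A N] [Module B N']
    (σ : A ≃+* B) (e : F ≃+ F') (he : ∀ (a : A) (x : F), e (a • x) = σ a • e x)
    (n : N ≃+ N') (hn : ∀ (a : A) (x : N), n (a • x) = σ a • n x) :
    Nonempty (F ≃ₗ[A] N) ↔ Nonempty (F' ≃ₗ[B] N') :=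
  ⟨fun ⟨f⟩ => ⟨txLin σ e he n hn f⟩,
   fun ⟨f⟩ => ⟨txLin σ.symm e.symm (tx_hg_symm σ e he) n.symm (tx_hg_symm σ n hn) f⟩⟩

end Transfer

section Transfer2

variable {A B : Type u} [Ring A] [Ring B]
variable {M M' : Type u} [AddCommGroup M] [AddCommGroup M'] [Module A M] [Module B M']

theorem txCompMult (σ : A ≃+* B) (g : M ≃+ M')
    (hg : ∀ (a : A) (x : M), g (a • x) = σ a • g x)
    {N N' : Type u} [AddCommGroup N] [AddCommGroup N'] [Module A N] [Module B N']
    (n : N ≃+ N') (hn : ∀ (a : A) (x : N), n (a • x) = σ a • n x) :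
    compMult A M N = compMult B M' N' := by
  classical
  have hex : (∃ s : CompositionSeries (Submodule A M), s.head = ⊥ ∧ s.last = ⊤) ↔
      (∃ s : CompositionSeries (Submodule B M'), s.head = ⊥ ∧ s.last = ⊤) := by
    constructor
    · rintro ⟨s, hh, hl⟩
      refine ⟨txSeries σ g hg s, ?_, ?_⟩
      · show txOrd σ g hg s.head = ⊥
        rw [hh]; exact (txOrd σ g hg).map_bot
      · show txOrd σ g hg s.last = ⊤
        rw [hl]; exact (txOrd σ g hg).map_top
    · rintro ⟨s, hh, hl⟩
      refine ⟨txSeries σ.symm g.symm (tx_hg_symm σ g hg) s, ?_, ?_⟩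
      · show txOrd σ.symm g.symm _ s.head = ⊥
        rw [hh]; exact (txOrd σ.symm g.symm _).map_bot
      · show txOrd σ.symm g.symm _ s.last = ⊤
        rw [hl]; exact (txOrd σ.symm g.symm _).map_top
  by_cases h1 : ∃ s : CompositionSeries (Submodule A M), s.head = ⊥ ∧ s.last = ⊤
  · have h2 := hex.1 h1
    unfold compMult
    rw [dif_pos h1, dif_pos h2]
    have heqv : (txSeries σ g hg h1.choose).Equivalent h2.choose := by
      apply CompositionSeries.jordan_holder
      · show txOrd σ g hg h1.choose.head = h2.choose.head
        rw [h1.choose_spec.1, h2.choose_spec.1]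
        exact (txOrd σ g hg).map_bot
      · show txOrd σ g hg h1.choose.last = h2.choose.last
        rw [h1.choose_spec.2, h2.choose_spec.2]
        exact (txOrd σ g hg).map_top
    obtain ⟨f, hf⟩ := heqv
    apply Finset.card_equiv f
    intro i
    simp only [Finset.mem_filter, Finset.mem_univ, true_and]
    erw [Finset.mem_filter_univ]
    have hcompat : ∀ x : ↥(h1.choose i.succ),
        x ∈ Submodule.comap (h1.choose i.succ).subtype (h1.choose i.castSucc) ↔
        (txSubEquiv σ g hg (h1.choose i.succ)) x ∈
          Submodule.comap (txSub σ g hg (h1.choose i.succ)).subtype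
            (txSub σ g hg (h1.choose i.castSucc)) := by
      intro x
      simp only [Submodule.mem_comap, Submodule.coe_subtype]
      constructor
      · intro h; exact ⟨(x : M), h, rfl⟩
      · intro h
        rw [mem_txSub] at h
        have hc : g.symm (((txSubEquiv σ g hg (h1.choose i.succ)) x : M')) = (x : M) :=
          g.symm_apply_apply (x : M)
        rwa [hc] at h
    have step1 := txNonemptyIff σ
      (txQuot (Submodule.comap (h1.choose i.succ).subtype (h1.choose i.castSucc))
        (Submodule.comap (txSub σ g hg (h1.choose i.succ)).subtype
          (txSub σ g hg (h1.choose i.castSucc)))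
        (txSubEquiv σ g hg (h1.choose i.succ)) hcompat)
      (txQuot_smul σ _ _ _ (txSubEquiv_smul σ g hg _) hcompat) n hn
    have j := JordanHolderLattice.Iso.linearEquiv (hf i)
    constructor
    · rintro ⟨k⟩
      obtain ⟨k'⟩ := step1.1 ⟨k⟩
      exact ⟨j.symm.trans k'⟩
    · rintro ⟨k⟩
      exact step1.2 ⟨j.trans k⟩
  · have h2 : ¬∃ s : CompositionSeries (Submodule B M'), s.head = ⊥ ∧ s.last = ⊤ :=
      fun h => h1 (hex.2 h)
    unfold compMult
    rw [dif_neg h1, dif_neg h2]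

end Transfer2

section CellAux

variable {R A : Type u} [CommRing R] [Ring A] [Algebra R A]
variable {Λp : Type u} [PartialOrder Λp] {T : Λp → Type u} [∀ l, Fintype (T l)]

namespace CellDatum

theorem star_star (D : CellDatum R A Λp T) (x : A) : D.star (D.star x) = x := by
  have h : D.star ∘ₗ D.star = LinearMap.id := by
    apply D.basis.ext
    rintro ⟨l, s, t⟩
    rw [D.basis_eq]
    simp [D.star_c]
  simpa using DFunLike.congr_fun h x

/-- The ring isomorphism `A ≃ Aᵐᵒᵖ` induced by the cellular anti-automorphism. -/
def sigma (D : CellDatum R A Λp T) : A ≃+* Aᵐᵒᵖ where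
  toFun a := op (D.star a)
  invFun m := D.star (unop m)
  left_inv a := D.star_star a
  right_inv m := by
    show op (D.star (D.star (unop m))) = m
    rw [D.star_star, op_unop]
  map_add' a b := by
    show op (D.star (a + b)) = op (D.star a) + op (D.star b)
    rw [map_add, op_add]
  map_mul' a b := by
    show op (D.star (a * b)) = op (D.star a) * op (D.star b)
    rw [D.star_mul, op_mul]

theorem act_eq [∀ l, DecidableEq (T l)] (D : CellDatum R A Λp T)
    [∀ l, Module Aᵐᵒᵖ (T l → R)] [∀ l, Module A (T l → R)]
    (hR : D.RightStd) (hL : D.LeftStd) (l : Λp) (a : A) (x : T l → R) :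
    a • x = op (D.star a) • x := by
  have hx : ∑ t, x t • (Pi.single t 1 : T l → R) = x := by
    funext v
    simp [Finset.sum_apply, Pi.single_apply]
  conv_lhs => rw [← hx]
  conv_rhs => rw [← hx]
  rw [Finset.smul_sum, Finset.smul_sum]
  refine Finset.sum_congr rfl fun t _ => ?_
  rw [hL.1 l (x t) a, hR.1 l (x t) (op (D.star a)), hL.2 l t a, hR.2 l t (D.star a)]

theorem smul_c_eq_zero (D : CellDatum R A Λp T) (l : Λp) (u v : T l) {r : R}
    (h : r • D.c l u v ∈ D.Aup l) : r = 0 := by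
  have hset : {x : A | ∃ l' s' t', l < l' ∧ x = D.c l' s' t'} =
      ⇑D.basis '' {i : (l' : Λp) × (T l' × T l') | l < i.1} := by
    ext x
    constructor
    · rintro ⟨l', s', t', hl, rfl⟩
      exact ⟨⟨l', (s', t')⟩, hl, D.basis_eq l' s' t'⟩
    · rintro ⟨⟨l', s', t'⟩, hl, rfl⟩
      exact ⟨l', s', t', hl, D.basis_eq l' s' t'⟩
  rw [CellDatum.Aup, hset, Module.Basis.mem_span_image] at h
  by_contra h0
  have hmem : (⟨l, (u, v)⟩ : (l' : Λp) × (T l' × T l')) ∈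
      (D.basis.repr (r • D.c l u v)).support := by
    rw [Finsupp.mem_support_iff, ← D.basis_eq, map_smul, Module.Basis.repr_self]
    simp only [Finsupp.smul_apply, Finsupp.single_eq_same, smul_eq_mul, mul_one]
    exact h0
  exact lt_irrefl l (h hmem)

theorem phi_symm (D : CellDatum R A Λp T) (φ : ∀ l, T l → T l → R)
    (hφ : D.FormData φ) (l : Λp) (s t : T l) : φ l s t = φ l t s := by
  have hstar : ∀ x ∈ D.Aup l, D.star x ∈ D.Aup l := by
    intro x hx
    have hmap : Submodule.map D.star (D.Aup l) ≤ D.Aup l := by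
      rw [CellDatum.Aup, Submodule.map_span]
      apply Submodule.span_le.2
      rintro _ ⟨y, ⟨l', s', t', hl, rfl⟩, rfl⟩
      rw [D.star_c]
      exact Submodule.subset_span ⟨l', t', s', hl, rfl⟩
    exact hmap ⟨x, hx, rfl⟩
  have h1 := hφ l s t s t
  have h2' := hstar _ (hφ l t s t s)
  rw [map_sub, map_smul, D.star_mul, D.star_c, D.star_c, D.star_c] at h2'
  have h3 := Submodule.sub_mem _ h2' h1
  have he : (D.c l s s * D.c l t t - φ l t s • D.c l s t) -
      (D.c l s s * D.c l t t - φ l s t • D.c l s t) =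
      (φ l s t - φ l t s) • D.c l s t := by
    rw [sub_smul]; abel
  rw [he] at h3
  exact sub_eq_zero.1 (D.smul_c_eq_zero l s t h3)

end CellDatum

end CellAux


/-- over a field, the decomposition numbers computed from right standard
modules agree with those computed from left standard modules:
`[W^λ : L^μ]_A = [ᶠW^λ : ᶠL^μ]_A` for `λ ∈ Λ⁺` and `μ ∈ Λ⁺₀`. -/
theorem stmt_0
    {R A : Type u} [Field R] [Ring A] [Algebra R A]
    {Λp : Type u} [PartialOrder Λp] [Fintype Λp]
    {T : Λp → Type u} [∀ l, Fintype (T l)] [∀ l, DecidableEq (T l)]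
    (D : CellDatum R A Λp T)
    [∀ l, Module Aᵐᵒᵖ (T l → R)] [∀ l, Module A (T l → R)]
    (hRStd : D.RightStd) (hLStd : D.LeftStd)
    (φ : ∀ l, T l → T l → R) (hφ : D.FormData φ)
    (radW : ∀ l, Submodule Aᵐᵒᵖ (T l → R))
    (hradW : ∀ (l) (x : T l → R), x ∈ radW l ↔ ∀ y, formSum (φ l) x y = 0)
    (radWl : ∀ l, Submodule A (T l → R))
    (hradWl : ∀ (l) (x : T l → R), x ∈ radWl l ↔ ∀ y, formSum (φ l) y x = 0)
    (lam mu : Λp) (hmu : Nontrivial ((T mu → R) ⧸ radW mu)) :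
    compMult Aᵐᵒᵖ (T lam → R) ((T mu → R) ⧸ radW mu) =
      compMult A (T lam → R) ((T mu → R) ⧸ radWl mu) := by
  classical
  have hσ : ∀ m : Aᵐᵒᵖ, D.sigma.symm m = D.star (unop m) := fun m => rfl
  have hact : ∀ (l : Λp) (m : Aᵐᵒᵖ) (x : T l → R), m • x = D.sigma.symm m • x := by
    intro l m x
    rw [hσ]
    have h := D.act_eq hRStd hLStd l (D.star (unop m)) x
    rw [D.star_star, op_unop] at h
    exact h.symm
  have hg : ∀ (m : Aᵐᵒᵖ) (x : T lam → R),
      (AddEquiv.refl (T lam → R)) (m • x) = D.sigma.symm m • (AddEquiv.refl (T lam → R)) x :=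
    fun m x => hact lam m x
  have hsym : ∀ x y : T mu → R, formSum (φ mu) x y = formSum (φ mu) y x := by
    intro x y
    rw [formSum, formSum, Finset.sum_comm]
    refine Finset.sum_congr rfl fun t _ => Finset.sum_congr rfl fun s _ => ?_
    rw [D.phi_symm φ hφ mu s t]
    ring
  have hrad : ∀ x : T mu → R, x ∈ radW mu ↔ x ∈ radWl mu := by
    intro x
    rw [hradW, hradWl]
    constructor
    · intro h y
      rw [← hsym x y]
      exact h y
    · intro h y
      rw [hsym x y]
      exact h y
  have hradq : ∀ x : T mu → R, x ∈ radW mu ↔ (AddEquiv.refl (T mu → R)) x ∈ radWl mu := hrad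
  exact txCompMult D.sigma.symm (AddEquiv.refl (T lam → R)) hg
    (txQuot (radW mu) (radWl mu) (AddEquiv.refl (T mu → R)) hradq)
    (txQuot_smul D.sigma.symm (radW mu) (radWl mu) (AddEquiv.refl (T mu → R))
      (fun m x => hact mu m x) hradq)
end
end

section
/- Let A be a cellular algebra over a field R with block decomposition A = ⊕_Γ B_Γ indexed by cell-linkage classes Γ ∈ Λ⁺/∼, and let e_Γ be the block idempotent with e_Γ A = B_Γ. Then e_Γ* = e_Γ, and B_Γ has a cellular basis {b^λ_{s,t} : s,t ∈ T(λ), λ ∈ Γ} with b^λ_{s,t} ≡ c^λ_{s,t} mod A^{∨λ} in A; moreover the union of these bases over all Γ is a cellular basis of A. -/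
open MulOpposite

noncomputable section

universe u

section AuxBlock

/-- Distinct primitive central idempotents are orthogonal. -/
lemma prim_orth {A : Type u} [Ring A] {e e' : A} (he : IsPrimCentralIdem A e)
    (he' : IsPrimCentralIdem A e') (hne : e ≠ e') : e * e' = 0 := by
  have key : ∀ x y : A, IsPrimCentralIdem A x → IsPrimCentralIdem A y →
      x * y = 0 ∨ x = x * y := by
    intro x y hx hy
    obtain ⟨hix, hcx, hnx, hpx⟩ := hx
    obtain ⟨hiy, hcy, hny, hpy⟩ := hy
    have cxy : ∀ a : A, a * y = y * a := fun a => Semigroup.mem_center_iff.mp hcy a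
    have cyx : ∀ a : A, a * x = x * a := fun a => Semigroup.mem_center_iff.mp hcx a
    have hixy : IsIdempotentElem (x * y) := by
      show x * y * (x * y) = x * y
      calc x * y * (x * y) = x * (y * x) * y := by noncomm_ring
        _ = x * (x * y) * y := by rw [← cxy x]
        _ = (x * x) * (y * y) := by noncomm_ring
        _ = x * y := by rw [hix.eq, hiy.eq]
    have hcom : x * (1 - y) = (1 - y) * x := by
      rw [mul_one_sub, one_sub_mul, cxy x]
    have hixny : IsIdempotentElem (x * (1 - y)) := by
      show x * (1 - y) * (x * (1 - y)) = x * (1 - y)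
      calc x * (1 - y) * (x * (1 - y)) = x * ((1 - y) * x) * (1 - y) := by noncomm_ring
        _ = x * (x * (1 - y)) * (1 - y) := by rw [← hcom]
        _ = (x * x) * ((1 - y) * (1 - y)) := by noncomm_ring
        _ = x * (1 - y) := by rw [hix.eq, hiy.one_sub.eq]
    have hc1 : x * y ∈ Set.center A := by
      refine Semigroup.mem_center_iff.mpr fun g => ?_
      calc g * (x * y) = (g * x) * y := by rw [mul_assoc]
        _ = (x * g) * y := by rw [cyx g]
        _ = x * (g * y) := by rw [mul_assoc]
        _ = x * (y * g) := by rw [cxy g]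
        _ = (x * y) * g := by rw [mul_assoc]
    have hc2 : x * (1 - y) ∈ Set.center A := by
      refine Semigroup.mem_center_iff.mpr fun g => ?_
      have c1y : ∀ a : A, a * (1 - y) = (1 - y) * a := fun a => by
        rw [mul_one_sub, one_sub_mul, cxy a]
      calc g * (x * (1 - y)) = (g * x) * (1 - y) := by rw [mul_assoc]
        _ = (x * g) * (1 - y) := by rw [cyx g]
        _ = x * (g * (1 - y)) := by rw [mul_assoc]
        _ = x * ((1 - y) * g) := by rw [c1y g]
        _ = (x * (1 - y)) * g := by rw [mul_assoc]
    have horth' : (x * y) * (x * (1 - y)) = 0 := by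
      calc (x * y) * (x * (1 - y)) = x * (y * x) * (1 - y) := by noncomm_ring
        _ = x * (x * y) * (1 - y) := by rw [← cxy x]
        _ = (x * x) * (y * (1 - y)) := by noncomm_ring
        _ = (x * x) * (y - y * y) := by rw [mul_one_sub]
        _ = 0 := by rw [hiy.eq, sub_self, mul_zero]
    have hsum : x = x * y + x * (1 - y) := by noncomm_ring
    rcases hpx (x * y) (x * (1 - y)) hixy hixny hc1 hc2 horth' hsum with h | h
    · exact Or.inl h
    · right
      have : x - x * y = 0 := by rw [← mul_one_sub]; exact h
      have := sub_eq_zero.mp this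
      exact this
  rcases key e e' he he' with h | h
  · exact h
  · rcases key e' e he' he with h' | h'
    · have ce : ∀ a : A, a * e = e * a := fun a => Semigroup.mem_center_iff.mp he.2.1 a
      rw [← ce e']
      exact h'
    · exfalso
      apply hne
      have ce : ∀ a : A, a * e = e * a := fun a => Semigroup.mem_center_iff.mp he.2.1 a
      conv_rhs => rw [h', ce e']
      exact h
end AuxBlock

/-- for the block decomposition `A = ⊕_Γ B_Γ` indexed by the cell-linkage
classes (with block idempotents `e_Γ = f Γ`), each block idempotent is `*`-invariant,
and there is a new cellular basis `b` of `A`, congruent to `c` modulo higher terms,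
compatible with the block decomposition: `b l s t ∈ B_{⟦l⟧}`, the `b`'s form a basis of
`A`, are `*`-stable, satisfy the cellular multiplication rule, and the `b`'s belonging
to a block `Γ` span that block. -/

theorem stmt_4
    {R A : Type u} [Field R] [Ring A] [Algebra R A]
    {Λp : Type u} [PartialOrder Λp] [Fintype Λp]
    {T : Λp → Type u} [∀ l, Fintype (T l)] [∀ l, Nonempty (T l)] [∀ l, DecidableEq (T l)]
    (D : CellDatum R A Λp T)
    [∀ l, Module Aᵐᵒᵖ (T l → R)] (hRStd : D.RightStd)
    (φ : ∀ l, T l → T l → R) (hφ : D.FormData φ)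
    -- the block idempotents, indexed by the cell-linkage classes
    (f : Quot (fun l m : Λp => ShareFactor Aᵐᵒᵖ (T l → R) (T m → R)) → A)
    (hf : ∀ Γ, IsPrimCentralIdem A (f Γ))
    (hfinj : Function.Injective f)
    (hfsurj : ∀ e : A, IsPrimCentralIdem A e → ∃ Γ, f Γ = e)
    (hfblock : ∀ l : Λp, InBlock Aᵐᵒᵖ (op (f (Quot.mk _ l))) (T l → R)) :
    (∀ Γ, D.star (f Γ) = f Γ) ∧
    ∃ b : ∀ l, T l → T l → A,
      (∀ (l) (s t : T l), b l s t - D.c l s t ∈ D.Aup l) ∧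
      (∀ (l) (s t : T l), f (Quot.mk _ l) * b l s t = b l s t) ∧
      (∀ (l) (s t : T l), D.star (b l s t) = b l t s) ∧
      (∃ bb : Module.Basis ((l : Λp) × (T l × T l)) R A,
        ∀ p : (l : Λp) × (T l × T l), bb p = b p.1 p.2.1 p.2.2) ∧
      (∀ (l) (t : T l) (a : A), ∃ r : T l → R, ∀ s,
        b l s t * a - ∑ v, r v • b l s v ∈
          Submodule.span R {x : A | ∃ l' s' t', l < l' ∧ x = b l' s' t'}) ∧
      (∀ Γ (x : A), f Γ * x = x →
        x ∈ Submodule.span R {y : A | ∃ l s t, Quot.mk _ l = Γ ∧ y = b l s t}) := by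
  classical
  have hcent : ∀ Γ (a : A), f Γ * a = a * f Γ := fun Γ a =>
    (Semigroup.mem_center_iff.mp (hf Γ).2.1 a).symm
  have horth : ∀ Γ Γ', Γ ≠ Γ' → f Γ * f Γ' = 0 := fun Γ Γ' h =>
    prim_orth (hf Γ) (hf Γ') (fun he => h (hfinj he))
  -- coefficients of the block idempotent acting on its own cell module
  have hco : ∀ (l : Λp) (t v : T l), D.coeff l t (f (Quot.mk _ l)) v = (Pi.single t 1 : T l → R) v := by
    intro l t v
    have h1 := hRStd.2 l t (f (Quot.mk _ l))
    rw [hfblock l (Pi.single t 1)] at h1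
    exact (congrFun h1 v).symm
  -- c * e ≡ c mod Aup
  have hce : ∀ (l : Λp) (s t : T l),
      D.c l s t * f (Quot.mk _ l) - D.c l s t ∈ D.Aup l := by
    intro l s t
    have h1 := D.mul_rule l s t (f (Quot.mk _ l))
    have h2 : (∑ v, D.coeff l t (f (Quot.mk _ l)) v • D.c l s v) = D.c l s t := by
      rw [Finset.sum_congr rfl (fun v _ => by rw [hco l t v])]
      rw [Fintype.sum_eq_single t (fun v hv => by rw [Pi.single_eq_of_ne hv, zero_smul])]
      rw [Pi.single_eq_same, one_smul]
    rwa [h2] at h1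
  set b : ∀ l : Λp, T l → T l → A := fun l s t => f (Quot.mk _ l) * D.c l s t with hbdef
  have hbc : ∀ (l : Λp) (s t : T l), b l s t - D.c l s t ∈ D.Aup l := by
    intro l s t
    have h := hce l s t
    rw [← hcent] at h
    exact h
  -- star maps Aup into Aup
  have hstarAup : ∀ (l : Λp) (x : A), x ∈ D.Aup l → D.star x ∈ D.Aup l := by
    intro l x hx
    induction hx using Submodule.span_induction with
    | mem y hy =>
      obtain ⟨l', s', t', hl, rfl⟩ := hy
      rw [D.star_c]
      exact Submodule.subset_span ⟨l', t', s', hl, rfl⟩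
    | zero => rw [map_zero]; exact zero_mem _
    | add y z _ _ hy hz => rw [map_add]; exact add_mem hy hz
    | smul r y _ hy => rw [map_smul]; exact Submodule.smul_mem _ r hy
  -- star is involutive
  have hss : ∀ a : A, D.star (D.star a) = a := by
    have h : D.star ∘ₗ D.star = LinearMap.id := by
      apply D.basis.ext
      rintro ⟨l, s, t⟩
      simp only [LinearMap.comp_apply, LinearMap.id_apply, D.basis_eq, D.star_c]
    intro a
    have := LinearMap.ext_iff.mp h a
    simpa using this
  have hstar_central : ∀ z : A, z ∈ Set.center A → D.star z ∈ Set.center A := by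
    intro z hz
    refine Semigroup.mem_center_iff.mpr fun g => ?_
    conv_lhs => rw [← hss g]
    rw [← D.star_mul, ← Semigroup.mem_center_iff.mp hz (D.star g), D.star_mul, hss]
  -- vanishing of level-l coordinates on Aup l
  have hrepr : ∀ (l : Λp) (x : A), x ∈ D.Aup l → ∀ p : T l × T l,
      D.basis.repr x ⟨l, p⟩ = 0 := by
    intro l x hx
    induction hx using Submodule.span_induction with
    | mem y hy =>
      obtain ⟨l', s', t', hl, rfl⟩ := hy
      intro p
      rw [← D.basis_eq, D.basis.repr_self, Finsupp.single_apply, if_neg]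
      intro h
      exact absurd (congrArg Sigma.fst h) (ne_of_gt hl)
    | zero => intro p; simp
    | add y z _ _ hy hz => intro p; rw [map_add, Finsupp.add_apply, hy p, hz p, add_zero]
    | smul r y _ hy => intro p; rw [map_smul, Finsupp.smul_apply, hy p, smul_zero]
  -- star-invariance of the block idempotents
  have hstarf : ∀ Γ, D.star (f Γ) = f Γ := by
    intro Γ
    obtain ⟨l, rfl⟩ := Quot.exists_rep Γ
    have h1 : IsPrimCentralIdem A (D.star (f (Quot.mk _ l))) := by
      refine ⟨?_, hstar_central _ (hf _).2.1, ?_, ?_⟩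
      · show D.star (f (Quot.mk _ l)) * D.star (f (Quot.mk _ l)) = D.star (f (Quot.mk _ l))
        rw [← D.star_mul, (hf (Quot.mk _ l)).1.eq]
      · intro h0
        have h2 : f (Quot.mk _ l) = 0 := by
          rw [← hss (f (Quot.mk _ l)), h0, map_zero]
        exact (hf (Quot.mk _ l)).2.2.1 h2
      · intro p q hp hq hcp hcq hpq hsum
        have hsum' : f (Quot.mk _ l) = D.star p + D.star q := by
          rw [← hss (f (Quot.mk _ l)), hsum, map_add]
        have hip : IsIdempotentElem (D.star p) := by
          show D.star p * D.star p = D.star p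
          rw [← D.star_mul, hp.eq]
        have hiq : IsIdempotentElem (D.star q) := by
          show D.star q * D.star q = D.star q
          rw [← D.star_mul, hq.eq]
        have hz : D.star p * D.star q = 0 := by
          rw [← D.star_mul, Semigroup.mem_center_iff.mp hcp q, hpq, map_zero]
        rcases (hf (Quot.mk _ l)).2.2.2 (D.star p) (D.star q) hip hiq
            (hstar_central _ hcp) (hstar_central _ hcq) hz hsum' with h | h
        · left; rw [← hss p, h, map_zero]
        · right; rw [← hss q, h, map_zero]
    obtain ⟨Γ', hΓ'⟩ := hfsurj _ h1
    have hcoe : ∀ t : T l, (fun v => D.coeff l t (D.star (f (Quot.mk _ l))) v)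
        = Pi.single t 1 := by
      intro t
      funext v
      obtain ⟨s⟩ : Nonempty (T l) := inferInstance
      have h2 := D.mul_rule l s t (D.star (f (Quot.mk _ l)))
      have h3 := hstarAup l _ h2
      simp only [map_sub, map_sum, map_smul, D.star_mul, D.star_c, hss] at h3
      have h4 : f (Quot.mk _ l) * D.c l t s - D.c l t s ∈ D.Aup l := by
        rw [hcent]
        exact hce l t s
      have h5 : D.c l t s - ∑ w, D.coeff l t (D.star (f (Quot.mk _ l))) w • D.c l w s
          ∈ D.Aup l := by
        have h6 := sub_mem h3 h4
        have h7 : f (Quot.mk _ l) * D.c l t s -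
            (∑ w, D.coeff l t (D.star (f (Quot.mk _ l))) w • D.c l w s) -
            (f (Quot.mk _ l) * D.c l t s - D.c l t s)
            = D.c l t s - ∑ w, D.coeff l t (D.star (f (Quot.mk _ l))) w • D.c l w s := by
          abel
        rwa [h7] at h6
      have h8 := hrepr l _ h5 (v, s)
      rw [map_sub, map_sum] at h8
      simp only [map_smul, ← D.basis_eq, D.basis.repr_self] at h8
      rw [Finsupp.sub_apply, Finsupp.single_apply] at h8
      have h9 : ((∑ w, D.coeff l t (D.star (f (Quot.mk _ l))) w •
          Finsupp.single (⟨l, (w, s)⟩ : (l : Λp) × (T l × T l)) (1 : R))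
          (⟨l, (v, s)⟩ : (l : Λp) × (T l × T l)))
          = D.coeff l t (D.star (f (Quot.mk _ l))) v := by
        rw [Finsupp.finset_sum_apply]
        rw [Finset.sum_congr rfl (fun w _ => by
          rw [Finsupp.smul_apply, Finsupp.single_apply, smul_eq_mul])]
        rw [Fintype.sum_eq_single v (fun w hw => by
          rw [if_neg, mul_zero]
          intro hcontra
          apply hw
          have := (Sigma.mk.inj_iff.mp hcontra).2
          have := (Prod.mk.injEq _ _ _ _).mp (eq_of_heq this)
          exact this.1)]
        rw [if_pos rfl, mul_one]
      rw [h9] at h8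
      have h10 : D.coeff l t (D.star (f (Quot.mk _ l))) v
          = if (⟨l, (t, s)⟩ : (l : Λp) × (T l × T l)) = ⟨l, (v, s)⟩ then (1 : R) else 0 := by
        have := sub_eq_zero.mp h8
        exact this.symm
      rw [h10, Pi.single_apply]
      by_cases hvt : v = t
      · subst hvt; rw [if_pos rfl, if_pos rfl]
      · rw [if_neg, if_neg hvt]
        intro hcontra
        apply hvt
        have := (Sigma.mk.inj_iff.mp hcontra).2
        have := (Prod.mk.injEq _ _ _ _).mp (eq_of_heq this)
        exact this.1.symm
    have hΓeq : Γ' = Quot.mk _ l := by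
      by_contra hne
      obtain ⟨t⟩ : Nonempty (T l) := inferInstance
      have hx : op (D.star (f (Quot.mk _ l))) • (Pi.single t 1 : T l → R)
          = Pi.single t 1 := by
        rw [hRStd.2 l t (D.star (f (Quot.mk _ l))), hcoe t]
      have hx' : op (f Γ') • (Pi.single t 1 : T l → R) = Pi.single t 1 := by
        rw [hΓ']; exact hx
      have h0 : f (Quot.mk _ l) * f Γ' = 0 := horth _ _ (fun h => hne h.symm)
      have hzero : (Pi.single t 1 : T l → R) = 0 := by
        calc (Pi.single t 1 : T l → R)
            = op (f Γ') • (op (f (Quot.mk _ l)) • (Pi.single t 1 : T l → R)) := by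
              rw [hfblock l, hx']
          _ = (op (f Γ') * op (f (Quot.mk _ l))) • (Pi.single t 1 : T l → R) :=
              (mul_smul _ _ _).symm
          _ = op (f (Quot.mk _ l) * f Γ') • (Pi.single t 1 : T l → R) := by
              rw [← op_mul]
          _ = (0 : Aᵐᵒᵖ) • (Pi.single t 1 : T l → R) := by rw [h0, op_zero]
          _ = 0 := zero_smul _ _
      have h1' := congrFun hzero t
      rw [Pi.single_eq_same] at h1'
      exact one_ne_zero h1'
    rw [← hΓ', hΓeq]
  -- key span lemma
  have hkey : ∀ (l : Λp) Γ (x : A), x ∈ D.Aup l →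
      f Γ * x ∈ Submodule.span R
        {y : A | ∃ l' s' t', l < l' ∧ Quot.mk _ l' = Γ ∧ y = b l' s' t'} := by
    intro l
    refine wellFounded_gt.induction
      (C := fun l : Λp => ∀ Γ (x : A), x ∈ D.Aup l →
        f Γ * x ∈ Submodule.span R
          {y : A | ∃ l' s' t', l < l' ∧ Quot.mk _ l' = Γ ∧ y = b l' s' t'}) l ?_
    intro l IH Γ x hx
    induction hx using Submodule.span_induction with
    | mem y hy =>
      obtain ⟨l', s', t', hl, rfl⟩ := hy
      by_cases hq : Quot.mk _ l' = Γ
      · refine Submodule.subset_span ⟨l', s', t', hl, hq, ?_⟩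
        rw [← hq]
      · have hz : f Γ * b l' s' t' = 0 := by
          show f Γ * (f (Quot.mk _ l') * D.c l' s' t') = 0
          rw [← mul_assoc, horth Γ _ (fun h => hq h.symm), zero_mul]
        have heq : f Γ * D.c l' s' t' = f Γ * (D.c l' s' t' - b l' s' t') := by
          rw [mul_sub, hz, sub_zero]
        rw [heq]
        have hmem : D.c l' s' t' - b l' s' t' ∈ D.Aup l' := by
          have h := neg_mem (hbc l' s' t')
          rwa [neg_sub] at h
        refine Submodule.span_mono ?_ (IH l' hl Γ _ hmem)
        rintro y ⟨l'', s'', t'', hl'', hq'', rfl⟩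
        exact ⟨l'', s'', t'', lt_trans hl hl'', hq'', rfl⟩
    | zero => rw [mul_zero]; exact zero_mem _
    | add y z _ _ hy hz => rw [mul_add]; exact add_mem hy hz
    | smul r y _ hy => rw [mul_smul_comm]; exact Submodule.smul_mem _ r hy
  refine ⟨hstarf, b, hbc, ?_, ?_, ?_, ?_, ?_⟩
  · -- fixed by block idempotent
    intro l s t
    show f (Quot.mk _ l) * (f (Quot.mk _ l) * D.c l s t) = f (Quot.mk _ l) * D.c l s t
    rw [← mul_assoc, (hf (Quot.mk _ l)).1.eq]
  · -- star stability
    intro l s t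
    show D.star (f (Quot.mk _ l) * D.c l s t) = f (Quot.mk _ l) * D.c l t s
    rw [D.star_mul, D.star_c, hstarf, ← hcent]
  · -- basis
    have hcspan : ∀ l : Λp, ∀ s t : T l, D.c l s t ∈
        Submodule.span R (Set.range fun p : (l : Λp) × (T l × T l) => b p.1 p.2.1 p.2.2) := by
      intro l
      refine wellFounded_gt.induction
        (C := fun l : Λp => ∀ s t : T l, D.c l s t ∈
          Submodule.span R
            (Set.range fun p : (l : Λp) × (T l × T l) => b p.1 p.2.1 p.2.2)) l ?_
      intro l IH s t
      have h1 : b l s t ∈ Submodule.span R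
          (Set.range fun p : (l : Λp) × (T l × T l) => b p.1 p.2.1 p.2.2) :=
        Submodule.subset_span ⟨⟨l, (s, t)⟩, rfl⟩
      have hle : D.Aup l ≤ Submodule.span R
          (Set.range fun p : (l : Λp) × (T l × T l) => b p.1 p.2.1 p.2.2) := by
        refine Submodule.span_le.mpr ?_
        rintro y ⟨l', s', t', hl, rfl⟩
        exact IH l' hl s' t'
      have h2 := hle (hbc l s t)
      have h3 := sub_mem h1 h2
      rw [sub_sub_cancel] at h3
      exact h3
    have hspan : ⊤ ≤ Submodule.span R
        (Set.range fun p : (l : Λp) × (T l × T l) => b p.1 p.2.1 p.2.2) := by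
      rw [← D.basis.span_eq]
      refine Submodule.span_le.mpr ?_
      rintro y ⟨⟨l, s, t⟩, rfl⟩
      rw [D.basis_eq]
      exact hcspan l s t
    have hfin : Module.Finite R A := Module.Finite.of_basis D.basis
    have hcard : Fintype.card ((l : Λp) × (T l × T l)) = Module.finrank R A :=
      (Module.finrank_eq_card_basis D.basis).symm
    exact ⟨basisOfTopLeSpanOfCardEqFinrank _ hspan hcard, fun p =>
      congrFun (coe_basisOfTopLeSpanOfCardEqFinrank _ hspan hcard) p⟩
  · -- multiplication rule
    intro l t a
    refine ⟨fun v => D.coeff l t a v, fun s => ?_⟩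
    have h1 := D.mul_rule l s t a
    have h2 : b l s t * a - ∑ v, D.coeff l t a v • b l s v
        = f (Quot.mk _ l) * (D.c l s t * a - ∑ v, D.coeff l t a v • D.c l s v) := by
      show f (Quot.mk _ l) * D.c l s t * a -
          (∑ v, D.coeff l t a v • (f (Quot.mk _ l) * D.c l s v)) = _
      rw [mul_sub, ← mul_assoc, Finset.mul_sum]
      congr 1
      exact Finset.sum_congr rfl fun v _ => (mul_smul_comm _ _ _).symm
    rw [h2]
    refine Submodule.span_mono ?_ (hkey l (Quot.mk _ l) _ h1)
    rintro y ⟨l', s', t', hl, _, rfl⟩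
    exact ⟨l', s', t', hl, rfl⟩
  · -- block spans
    intro Γ x hx
    have hall : ∀ p : (l : Λp) × (T l × T l), f Γ * D.basis p ∈
        Submodule.span R {y : A | ∃ l s t, Quot.mk _ l = Γ ∧ y = b l s t} := by
      rintro ⟨l, s, t⟩
      rw [D.basis_eq]
      by_cases hq : Quot.mk _ l = Γ
      · refine Submodule.subset_span ⟨l, s, t, hq, ?_⟩
        rw [← hq]
      · have hz : f Γ * b l s t = 0 := by
          show f Γ * (f (Quot.mk _ l) * D.c l s t) = 0
          rw [← mul_assoc, horth Γ _ (fun h => hq h.symm), zero_mul]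
        have heq : f Γ * D.c l s t = f Γ * (D.c l s t - b l s t) := by
          rw [mul_sub, hz, sub_zero]
        rw [heq]
        have hmem : D.c l s t - b l s t ∈ D.Aup l := by
          have h := neg_mem (hbc l s t)
          rwa [neg_sub] at h
        refine Submodule.span_mono ?_ (hkey l Γ _ hmem)
        rintro y ⟨l', s', t', _, hq', rfl⟩
        exact ⟨l', s', t', hq', rfl⟩
    have hx' : ∀ w : A, w ∈ Submodule.span R (Set.range D.basis) → f Γ * w ∈
        Submodule.span R {y : A | ∃ l s t, Quot.mk _ l = Γ ∧ y = b l s t} := by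
      intro w hw
      induction hw using Submodule.span_induction with
      | mem y hy => obtain ⟨p, rfl⟩ := hy; exact hall p
      | zero => rw [mul_zero]; exact zero_mem _
      | add y z _ _ hy hz => rw [mul_add]; exact add_mem hy hz
      | smul r y _ hy => rw [mul_smul_comm]; exact Submodule.smul_mem _ r hy
    have hxmem : x ∈ Submodule.span R (Set.range D.basis) := by
      rw [D.basis.span_eq]; trivial
    have := hx' x hxmem
    rwa [hx] at this
end
end

section
/- Under Assumption (A1)–(A4), define T(λ,μ) = {t ∈ T(λ) : c^λ_{s,t} e_μ = c^λ_{s,t} for all s ∈ T(λ)}. Then: (i) if T(λ,μ) ≠ ∅ then λ ≥ μ in Λ̃; (ii) for s_i ∈ T(λ_i, μ_i) and t_i ∈ T(λ_i, ν_i) (i = 1,2), the product c^{λ₁}_{s₁,t₁} c^{λ₂}_{s₂,t₂} is zero unless ν₁ = μ₂, and in any case it is an R-linear combination of elements c^λ_{s,t} with λ ≥ λ₁, λ ≥ λ₂, s ∈ T(λ, μ₁), and t ∈ T(λ, ν₂). -/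
open MulOpposite

noncomputable section

universe u

section AuxStmt6

variable {R A : Type u} [CommRing R] [Ring A] [Algebra R A]
variable {Λp : Type u} [PartialOrder Λp]
variable {T : Λp → Type u} [∀ l, Fintype (T l)]
variable (D : CellDatum R A Λp T)

lemma aux_cellSpan_eq (P : Set Λp) :
    D.cellSpan P =
      Submodule.span R (D.basis '' {i : (l : Λp) × (T l × T l) | i.1 ∈ P}) := by
  unfold CellDatum.cellSpan
  congr 1
  ext x
  constructor
  · rintro ⟨l, s, t, hl, rfl⟩
    exact ⟨⟨l, (s, t)⟩, hl, D.basis_eq l s t⟩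
  · rintro ⟨⟨l, s, t⟩, hl, rfl⟩
    exact ⟨l, s, t, hl, D.basis_eq l s t⟩

lemma aux_mem_cellSpan {P : Set Λp} {x : A} :
    x ∈ D.cellSpan P ↔ ∀ i, D.basis.repr x i ≠ 0 → i.1 ∈ P := by
  rw [aux_cellSpan_eq, Module.Basis.mem_span_image]
  constructor
  · intro h i hi
    exact h (Finsupp.mem_support_iff.2 hi)
  · intro h i hi
    exact h i (Finsupp.mem_support_iff.1 hi)

lemma aux_c_mul (l : Λp) (s t : T l) (a : A) :
    D.c l s t * a ∈ D.cellSpan {l' | l ≤ l'} := by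
  have h := D.mul_rule l s t a
  have h1 : D.Aup l ≤ D.cellSpan {l' | l ≤ l'} := by
    apply Submodule.span_mono
    rintro x ⟨l', s', t', hl, rfl⟩
    exact ⟨l', s', t', hl.le, rfl⟩
  have h2 : (∑ v, D.coeff l t a v • D.c l s v) ∈ D.cellSpan {l' | l ≤ l'} :=
    Submodule.sum_mem _ fun v _ => Submodule.smul_mem _ _
      (Submodule.subset_span ⟨l, s, v, le_refl l, rfl⟩)
  have h3 := Submodule.add_mem _ (h1 h) h2
  simpa using h3


lemma aux_cellSpan_mono {P Q : Set Λp} (h : P ⊆ Q) : D.cellSpan P ≤ D.cellSpan Q := by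
  apply Submodule.span_mono
  rintro x ⟨l, s, t, hl, rfl⟩
  exact ⟨l, s, t, h hl, rfl⟩

lemma aux_mul_right {P : Set Λp} (hP : ∀ l l', l ∈ P → l ≤ l' → l' ∈ P) {x : A} (a : A)
    (hx : x ∈ D.cellSpan P) : x * a ∈ D.cellSpan P := by
  induction hx using Submodule.span_induction with
  | mem y hy =>
    obtain ⟨l, s, t, hl, rfl⟩ := hy
    exact aux_cellSpan_mono D (fun l' hl' => hP l l' hl hl') (aux_c_mul D l s t a)
  | zero => simp
  | add y z _ _ hy hz => rw [add_mul]; exact Submodule.add_mem _ hy hz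
  | smul r y _ hy => rw [smul_mul_assoc]; exact Submodule.smul_mem _ _ hy

lemma aux_star_star (x : A) : D.star (D.star x) = x := by
  have h : D.star.comp D.star = LinearMap.id := by
    apply D.basis.ext
    rintro ⟨l, s, t⟩
    simp [D.basis_eq l s t, D.star_c]
  simpa using LinearMap.congr_fun h x

lemma aux_star_mem {P : Set Λp} {x : A} (hx : x ∈ D.cellSpan P) :
    D.star x ∈ D.cellSpan P := by
  induction hx using Submodule.span_induction with
  | mem y hy =>
    obtain ⟨l, s, t, hl, rfl⟩ := hy
    rw [D.star_c]
    exact Submodule.subset_span ⟨l, t, s, hl, rfl⟩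
  | zero => rw [map_zero]; exact Submodule.zero_mem _
  | add y z _ _ hy hz => rw [map_add]; exact Submodule.add_mem _ hy hz
  | smul r y _ hy => rw [map_smul]; exact Submodule.smul_mem _ _ hy

lemma aux_mul_left {P : Set Λp} (hP : ∀ l l', l ∈ P → l ≤ l' → l' ∈ P) {x : A} (a : A)
    (hx : x ∈ D.cellSpan P) : a * x ∈ D.cellSpan P := by
  have h := aux_mul_right D hP (D.star a) (aux_star_mem D hx)
  have h2 := aux_star_mem D h
  rwa [D.star_mul, aux_star_star, aux_star_star] at h2

end AuxStmt6

/-- under (A1)–(A4): (i) if `T(λ,μ) ≠ ∅` then `λ ≥ μ` in `Λ̃`; (ii) for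
`s_i ∈ T(λ_i,μ_i)`, `t_i ∈ T(λ_i,ν_i)`, the product `c^{λ₁}_{s₁t₁} c^{λ₂}_{s₂t₂}`
vanishes unless `ν₁ = μ₂`, and in any case lies in the span of the `c^λ_{st}` with
`λ ≥ λ₁`, `λ ≥ λ₂`, `s ∈ T(λ,μ₁)` and `t ∈ T(λ,ν₂)`. -/
theorem stmt_6
    {R A : Type u} [CommRing R] [Ring A] [Algebra R A]
    {Λp : Type u} [PartialOrder Λp] [Fintype Λp]
    {T : Λp → Type u} [∀ l, Fintype (T l)]
    {Λt M : Type u} [PartialOrder Λt] [Fintype M]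
    (D : CellDatum R A Λp T)
    (ι : Λp → Λt) (κ : M → Λt) (e : M → A)
    (hA : D.IdemData ι κ e) :
    (∀ (l : Λp) (μ : M), (D.Tset e l μ).Nonempty → κ μ ≤ ι l) ∧
    (∀ (l₁ l₂ : Λp) (μ₁ ν₁ μ₂ ν₂ : M) (s₁ t₁ : T l₁) (s₂ t₂ : T l₂),
      s₁ ∈ D.Tset e l₁ μ₁ → t₁ ∈ D.Tset e l₁ ν₁ →
      s₂ ∈ D.Tset e l₂ μ₂ → t₂ ∈ D.Tset e l₂ ν₂ →
      (ν₁ ≠ μ₂ → D.c l₁ s₁ t₁ * D.c l₂ s₂ t₂ = 0) ∧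
      D.c l₁ s₁ t₁ * D.c l₂ s₂ t₂ ∈
        Submodule.span R {x : A | ∃ (l : Λp) (s t : T l), l₁ ≤ l ∧ l₂ ≤ l ∧
          s ∈ D.Tset e l μ₁ ∧ t ∈ D.Tset e l ν₂ ∧ x = D.c l s t}) := by
  have hnontriv : ∀ _ : M, Nontrivial R := by
    intro μ
    rcases subsingleton_or_nontrivial R with h | h
    · haveI := Module.subsingleton R A
      exact absurd (Subsingleton.elim (e μ) 0) (hA.ne_zero μ)
    · exact h
  constructor
  · -- Part (i)
    rintro l μ ⟨t, ht⟩
    haveI := hnontriv μ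
    have hup : ∀ l₁ l₂, l₁ ∈ {l' : Λp | κ μ ≤ ι l'} → l₁ ≤ l₂ →
        l₂ ∈ {l' : Λp | κ μ ≤ ι l'} :=
      fun l₁ l₂ h hle => le_trans h ((hA.order_iff l₁ l₂).2 hle)
    have hemu : e μ ∈ D.cellSpan {l' | κ μ ≤ ι l'} := hA.mem_span μ
    have hmem : D.c l t t ∈ D.cellSpan {l' | κ μ ≤ ι l'} := by
      have h := aux_mul_right D hup (D.c l t t) hemu
      rwa [ht.2 t] at h
    have h := (aux_mem_cellSpan D).1 hmem ⟨l, (t, t)⟩ ?_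
    · exact h
    · rw [← D.basis_eq, D.basis.repr_self]
      simp
  · -- Part (ii)
    intro l₁ l₂ μ₁ ν₁ μ₂ ν₂ s₁ t₁ s₂ t₂ hs₁ ht₁ hs₂ ht₂
    haveI := hnontriv μ₁
    constructor
    · intro hne
      calc D.c l₁ s₁ t₁ * D.c l₂ s₂ t₂
          = (D.c l₁ s₁ t₁ * e ν₁) * (e μ₂ * D.c l₂ s₂ t₂) := by
            rw [ht₁.1 s₁, hs₂.2 t₂]
        _ = D.c l₁ s₁ t₁ * ((e ν₁ * e μ₂) * D.c l₂ s₂ t₂) := by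
            rw [mul_assoc, mul_assoc]
        _ = 0 := by rw [hA.orth ν₁ μ₂ hne, zero_mul, mul_zero]
    · set x := D.c l₁ s₁ t₁ * D.c l₂ s₂ t₂ with hxdef
      have hx1 : x ∈ D.cellSpan {l | l₁ ≤ l} := aux_c_mul D l₁ s₁ t₁ _
      have hx2 : x ∈ D.cellSpan {l | l₂ ≤ l} := by
        apply aux_mul_left D (fun l l' h hle => le_trans h hle) (D.c l₁ s₁ t₁)
        exact Submodule.subset_span ⟨l₂, s₂, t₂, le_refl l₂, rfl⟩
      have hsupp : ∀ i, D.basis.repr x i ≠ 0 → l₁ ≤ i.1 ∧ l₂ ≤ i.1 := fun i hi =>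
        ⟨(aux_mem_cellSpan D).1 hx1 i hi, (aux_mem_cellSpan D).1 hx2 i hi⟩
      have hxe : x = e μ₁ * x * e ν₂ := by
        rw [hxdef, ← mul_assoc, hs₁.2 t₁, mul_assoc, ht₂.1 s₂]
      have hexp : x = ∑ i, D.basis.repr x i • D.basis i := (D.basis.sum_repr x).symm
      rw [hxe, hexp, Finset.mul_sum, Finset.sum_mul]
      apply Submodule.sum_mem
      intro i _
      rcases i with ⟨l, s, t⟩
      by_cases hri : D.basis.repr x ⟨l, (s, t)⟩ = 0
      · rw [hri, zero_smul, mul_zero, zero_mul]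
        exact Submodule.zero_mem _
      · obtain ⟨hl1, hl2⟩ := hsupp ⟨l, (s, t)⟩ hri
        rw [mul_smul_comm, smul_mul_assoc]
        apply Submodule.smul_mem
        rw [D.basis_eq l s t]
        obtain ⟨μ', hμ'⟩ := hA.exists_idem l s
        obtain ⟨ν', hν'⟩ := hA.exists_idem l t
        by_cases hμ : μ₁ = μ'
        · have hs : s ∈ D.Tset e l μ₁ := hμ ▸ hμ'
          have he1 : e μ₁ * D.c l s t = D.c l s t := hμ ▸ hμ'.2 t
          by_cases hν : ν' = ν₂
          · have ht : t ∈ D.Tset e l ν₂ := hν ▸ hν'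
            have he2 : D.c l s t * e ν₂ = D.c l s t := hν ▸ hν'.1 s
            rw [he1, he2]
            exact Submodule.subset_span ⟨l, s, t, hl1, hl2, hs, ht, rfl⟩
          · have he2 : D.c l s t * e ν₂ = 0 := by
              rw [← hν'.1 s, mul_assoc, hA.orth ν' ν₂ hν, mul_zero]
            rw [he1, he2]
            exact Submodule.zero_mem _
        · have he1 : e μ₁ * D.c l s t = 0 := by
            rw [← hμ'.2 t, ← mul_assoc, hA.orth μ₁ μ' hμ, zero_mul]
          rw [he1, zero_mul]
          exact Submodule.zero_mem _
end
end

section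
/- Under Assumption (A1)–(A4), for each μ ∈ Λ the idempotent e_μ can be written as an R-linear combination of cellular basis elements c^λ_{s,t} with λ ≥ μ and s,t ∈ T(λ,μ). -/
open MulOpposite

noncomputable section

universe u

/-- under (A1)–(A4), each idempotent `e μ` lies in the span of the
cellular basis elements `c^λ_{st}` with `λ ≥ μ` and `s, t ∈ T(λ,μ)`. -/
theorem stmt_7
    {R A : Type u} [CommRing R] [Ring A] [Algebra R A]
    {Λp : Type u} [PartialOrder Λp] [Fintype Λp]
    {T : Λp → Type u} [∀ l, Fintype (T l)]
    {Λt M : Type u} [PartialOrder Λt] [Fintype M]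
    (D : CellDatum R A Λp T)
    (ι : Λp → Λt) (κ : M → Λt) (e : M → A)
    (hA : D.IdemData ι κ e) :
    ∀ μ : M, e μ ∈ Submodule.span R {x : A | ∃ (l : Λp) (s t : T l),
      κ μ ≤ ι l ∧ s ∈ D.Tset e l μ ∧ t ∈ D.Tset e l μ ∧ x = D.c l s t} := by
  intro μ
  have key : e μ * e μ * e μ = e μ := by rw [hA.idem, hA.idem]
  suffices h : ∀ x ∈ Submodule.span R {x : A | ∃ l s t, κ μ ≤ ι l ∧ x = D.c l s t},
      e μ * x * e μ ∈ Submodule.span R {x : A | ∃ (l : Λp) (s t : T l),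
        κ μ ≤ ι l ∧ s ∈ D.Tset e l μ ∧ t ∈ D.Tset e l μ ∧ x = D.c l s t} by
    rw [← key]; exact h (e μ) (hA.mem_span μ)
  intro x hx
  induction hx using Submodule.span_induction with
  | zero => simp
  | add x y _ _ hx hy =>
    have hxy : e μ * (x + y) * e μ = e μ * x * e μ + e μ * y * e μ := by rw [mul_add, add_mul]
    rw [hxy]; exact Submodule.add_mem _ hx hy
  | smul r x _ hx =>
    rw [Algebra.mul_smul_comm, smul_mul_assoc]
    exact Submodule.smul_mem _ r hx
  | mem x hx =>
    obtain ⟨l, s, t, hle, rfl⟩ := hx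
    obtain ⟨ν, hν1, hν2⟩ := hA.exists_idem l t
    by_cases hνμ : ν = μ
    · subst hνμ
      have ht : D.c l s t * e ν = D.c l s t := hν1 s
      obtain ⟨ν', hν'1, hν'2⟩ := hA.exists_idem l s
      by_cases hν'μ : ν' = ν
      · subst hν'μ
        have hs : e ν' * D.c l s t = D.c l s t := hν'2 t
        rw [mul_assoc, ht, hs]
        exact Submodule.subset_span ⟨l, s, t, hle, ⟨hν'1, hν'2⟩, ⟨hν1, hν2⟩, rfl⟩
      · have h0 : e ν * D.c l s t = 0 := by
          rw [← hν'2 t, ← mul_assoc, hA.orth ν ν' (Ne.symm hν'μ), zero_mul]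
        rw [mul_assoc, ht, h0]
        exact Submodule.zero_mem _
    · have h0 : D.c l s t * e μ = 0 := by
        rw [← hν1 s, mul_assoc, hA.orth ν μ hνμ, mul_zero]
      rw [mul_assoc, h0, mul_zero]
      exact Submodule.zero_mem _
end
end

section
/- Let α : Λ̃ → X be an order-preserving map to a poset (X, ⪰) (i.e., λ ≥ μ implies α(λ) ⪰ α(μ)). Define T⁺_α(λ) = ∪_{μ: α(λ)=α(μ)} T(λ,μ) and T⁻_α(λ) = ∪_{μ: α(λ)≻α(μ)} T(λ,μ), and let A^α be the R-span of all c^λ_{s,t} with s,t both in T⁺_α(λ) or both in T⁻_α(λ). Then A^α is a subalgebra of A containing 1_A, and A^α is a cellular algebra with cellular basis Z^α = {c^λ_{s,t} : s,t ∈ I(λ,ε), (λ,ε) ∈ Ω} with respect to the poset Ω ordered by (λ,ε) > (λ',ε') iff ε > ε', or ε = ε' and λ > λ'. -/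
open MulOpposite

noncomputable section

universe u

set_option linter.unusedSectionVars false

namespace StmtAux

open Submodule

variable {R A : Type u} [CommRing R] [Ring A] [Algebra R A]
variable {Λp : Type u} [PartialOrder Λp]
variable {T : Λp → Type u} [∀ l, Fintype (T l)]
variable {Λt M X : Type u} [PartialOrder Λt] [PartialOrder X] [Fintype M]
variable {D : CellDatum R A Λp T} {ι : Λp → Λt} {κ : M → Λt} {e : M → A} {α : Λt → X}

/-- Index type of the cellular basis. -/
abbrev Idx (Λp : Type u) (T : Λp → Type u) : Type u := (l : Λp) × (T l × T l)

lemma basis_image (P : Set Λp) :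
    {x : A | ∃ l s t, l ∈ P ∧ x = D.c l s t} = ⇑D.basis '' {i : Idx Λp T | i.1 ∈ P} := by
  ext x
  constructor
  · rintro ⟨l, s, t, hl, rfl⟩
    exact ⟨⟨l, (s, t)⟩, hl, D.basis_eq l s t⟩
  · rintro ⟨⟨l, s, t⟩, hl, rfl⟩
    exact ⟨l, s, t, hl, D.basis_eq l s t⟩

lemma cellSpan_eq (P : Set Λp) :
    D.cellSpan P = span R (⇑D.basis '' {i : Idx Λp T | i.1 ∈ P}) := by
  rw [CellDatum.cellSpan, basis_image]

lemma Aup_eq_cellSpan (l : Λp) : D.Aup l = D.cellSpan {l' | l < l'} := rfl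

lemma star_star (x : A) : D.star (D.star x) = x := by
  have h : D.star ∘ₗ D.star = LinearMap.id := by
    apply D.basis.ext
    rintro ⟨l, s, t⟩
    simp only [LinearMap.comp_apply, LinearMap.id_apply, D.basis_eq, D.star_c]
  exact DFunLike.congr_fun h x

/-- The chosen idempotent index fixing the row/column of `t`. -/
noncomputable def mfun (hA : D.IdemData ι κ e) (l : Λp) (t : T l) : M :=
  (hA.exists_idem l t).choose

lemma mfun_mem (hA : D.IdemData ι κ e) (l : Λp) (t : T l) :
    t ∈ D.Tset e l (mfun hA l t) :=
  (hA.exists_idem l t).choose_spec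

lemma c_ne [Nontrivial R] (l : Λp) (s t : T l) : D.c l s t ≠ 0 := by
  rw [← D.basis_eq]; exact D.basis.ne_zero _

lemma tset_unique [Nontrivial R] (hA : D.IdemData ι κ e) {l : Λp} {t : T l} {μ : M}
    (h : t ∈ D.Tset e l μ) : μ = mfun hA l t := by
  by_contra hne
  have h1 : D.c l t t * e μ = D.c l t t := h.1 t
  have h2 : D.c l t t * e (mfun hA l t) = D.c l t t := (mfun_mem hA l t).1 t
  have h0 : D.c l t t = 0 := by
    calc D.c l t t = D.c l t t * e (mfun hA l t) * e μ := by rw [h2, h1]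
    _ = D.c l t t * (e (mfun hA l t) * e μ) := by rw [mul_assoc]
    _ = 0 := by rw [hA.orth _ _ (fun hh => hne hh.symm), mul_zero]
  exact c_ne l t t h0

lemma cellSpan_mul_right (P : Set Λp) (hP : ∀ ⦃l l'⦄, l ∈ P → l ≤ l' → l' ∈ P)
    {x : A} (hx : x ∈ D.cellSpan P) (a : A) : x * a ∈ D.cellSpan P := by
  induction hx using Submodule.span_induction with
  | mem x hx =>
    obtain ⟨l, s, t, hl, rfl⟩ := hx
    have h := D.mul_rule l s t a
    have h1 : (∑ v, D.coeff l t a v • D.c l s v) ∈ D.cellSpan P :=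
      Submodule.sum_mem _ fun v _ =>
        Submodule.smul_mem _ _ (Submodule.subset_span ⟨l, s, v, hl, rfl⟩)
    have h2 : D.c l s t * a - ∑ v, D.coeff l t a v • D.c l s v ∈ D.cellSpan P := by
      refine Submodule.span_le.2 ?_ h
      rintro x ⟨l', s', t', hl', rfl⟩
      exact Submodule.subset_span ⟨l', s', t', hP hl hl'.le, rfl⟩
    have := add_mem h2 h1
    rwa [sub_add_cancel] at this
  | zero => rw [zero_mul]; exact zero_mem _
  | add x y _ _ hx hy => rw [add_mul]; exact add_mem hx hy
  | smul r x _ hx => rw [smul_mul_assoc]; exact smul_mem _ _ hx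

lemma cellSpan_star (P : Set Λp) {x : A} (hx : x ∈ D.cellSpan P) :
    D.star x ∈ D.cellSpan P := by
  induction hx using Submodule.span_induction with
  | mem x hx =>
    obtain ⟨l, s, t, hl, rfl⟩ := hx
    rw [D.star_c]; exact subset_span ⟨l, t, s, hl, rfl⟩
  | zero => rw [map_zero]; exact zero_mem _
  | add x y _ _ hx hy => rw [map_add]; exact add_mem hx hy
  | smul r x _ hx => rw [map_smul]; exact smul_mem _ _ hx

lemma cellSpan_mul_left (P : Set Λp) (hP : ∀ ⦃l l'⦄, l ∈ P → l ≤ l' → l' ∈ P)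
    {x : A} (hx : x ∈ D.cellSpan P) (a : A) : a * x ∈ D.cellSpan P := by
  have h : a * x = D.star (D.star x * D.star a) := by
    rw [D.star_mul, star_star, star_star]
  rw [h]
  exact cellSpan_star P (cellSpan_mul_right P hP (cellSpan_star P hx) (D.star a))

lemma kappa_le [Nontrivial R] (hA : D.IdemData ι κ e) (l : Λp) (t : T l) :
    κ (mfun hA l t) ≤ ι l := by
  set μ := mfun hA l t with hμ
  have hup : ∀ ⦃l1 l2 : Λp⦄, l1 ∈ {l' | κ μ ≤ ι l'} → l1 ≤ l2 → l2 ∈ {l' | κ μ ≤ ι l'} :=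
    fun l1 l2 h1 h12 => le_trans h1 ((hA.order_iff l1 l2).2 h12)
  have he : e μ ∈ D.cellSpan {l' | κ μ ≤ ι l'} := hA.mem_span μ
  have h1 : D.c l t t ∈ D.cellSpan {l' | κ μ ≤ ι l'} := by
    have := cellSpan_mul_left _ hup he (D.c l t t)
    rwa [(mfun_mem hA l t).1 t] at this
  rw [cellSpan_eq, ← D.basis_eq, D.basis.self_mem_span_image] at h1
  exact h1

lemma alpha_le [Nontrivial R] (hA : D.IdemData ι κ e) (hα : Monotone α) (l : Λp) (t : T l) :
    α (κ (mfun hA l t)) ≤ α (ι l) := hα (kappa_le hA l t)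

lemma mem_Tplus_iff [Nontrivial R] (hA : D.IdemData ι κ e) {l : Λp} {t : T l} :
    t ∈ D.Tplus e ι κ α l ↔ α (ι l) = α (κ (mfun hA l t)) := by
  constructor
  · rintro ⟨μ, hμ, hh⟩; rwa [tset_unique hA hμ] at hh
  · intro h; exact ⟨_, mfun_mem hA l t, h⟩

lemma mem_Tminus_iff [Nontrivial R] (hA : D.IdemData ι κ e) {l : Λp} {t : T l} :
    t ∈ D.Tminus e ι κ α l ↔ α (κ (mfun hA l t)) < α (ι l) := by
  constructor
  · rintro ⟨μ, hμ, hh⟩; rwa [tset_unique hA hμ] at hh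
  · intro h; exact ⟨_, mfun_mem hA l t, h⟩

lemma iset_false {l : Λp} : D.Iset e ι κ α l false = D.Tplus e ι κ α l := rfl
lemma iset_true {l : Λp} : D.Iset e ι κ α l true = D.Tminus e ι κ α l := rfl

lemma eps_unique [Nontrivial R] (hA : D.IdemData ι κ e) {l : Λp} {t : T l} {ε ε' : Bool}
    (h : t ∈ D.Iset e ι κ α l ε) (h' : t ∈ D.Iset e ι κ α l ε') : ε = ε' := by
  cases ε <;> cases ε' <;> try rfl
  · rw [iset_false, mem_Tplus_iff hA] at h
    rw [iset_true, mem_Tminus_iff hA] at h'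
    exact absurd h h'.ne'
  · rw [iset_true, mem_Tminus_iff hA] at h
    rw [iset_false, mem_Tplus_iff hA] at h'
    exact absurd h' h.ne'

lemma same_eps [Nontrivial R] (hA : D.IdemData ι κ e) (hα : Monotone α) {l : Λp} {x y : T l}
    (h : α (κ (mfun hA l x)) = α (κ (mfun hA l y)) ∨
      (α (κ (mfun hA l x)) < α (ι l) ∧ α (κ (mfun hA l y)) < α (ι l))) :
    ∃ ε, x ∈ D.Iset e ι κ α l ε ∧ y ∈ D.Iset e ι κ α l ε := by
  rcases h with h | ⟨hx, hy⟩
  · rcases lt_or_eq_of_le (alpha_le hA hα l x) with hx | hx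
    · exact ⟨true, (mem_Tminus_iff hA).2 hx, (mem_Tminus_iff hA).2 (h ▸ hx)⟩
    · exact ⟨false, (mem_Tplus_iff hA).2 hx.symm, (mem_Tplus_iff hA).2 (by rw [← h, hx])⟩
  · exact ⟨true, (mem_Tminus_iff hA).2 hx, (mem_Tminus_iff hA).2 hy⟩

lemma mul_e_left (hA : D.IdemData ι κ e) (μ : M) (a : A) :
    e μ * a ∈ span R (⇑D.basis '' {i : Idx Λp T | mfun hA i.1 i.2.1 = μ}) := by
  have ha : a ∈ span R (Set.range ⇑D.basis) := by rw [D.basis.span_eq]; trivial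
  induction ha using Submodule.span_induction with
  | mem x hx =>
    obtain ⟨⟨l, s, t⟩, rfl⟩ := hx
    rw [D.basis_eq]
    by_cases h : mfun hA l s = μ
    · have h2 : e μ * D.c l s t = D.c l s t := by
        rw [← h]; exact (mfun_mem hA l s).2 t
      rw [h2]
      exact subset_span ⟨⟨l, (s, t)⟩, h, D.basis_eq l s t⟩
    · have h0 : e μ * D.c l s t = 0 := by
        have h1 : e (mfun hA l s) * D.c l s t = D.c l s t := (mfun_mem hA l s).2 t
        calc e μ * D.c l s t = e μ * (e (mfun hA l s) * D.c l s t) := by rw [h1]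
        _ = (e μ * e (mfun hA l s)) * D.c l s t := by rw [mul_assoc]
        _ = 0 := by rw [hA.orth _ _ (fun hh => h hh.symm), zero_mul]
      rw [h0]; exact zero_mem _
  | zero => rw [mul_zero]; exact zero_mem _
  | add x y _ _ hx hy => rw [mul_add]; exact add_mem hx hy
  | smul r x _ hx => rw [mul_smul_comm]; exact smul_mem _ _ hx

lemma mul_e_right (hA : D.IdemData ι κ e) (μ : M) (a : A) :
    a * e μ ∈ span R (⇑D.basis '' {i : Idx Λp T | mfun hA i.1 i.2.2 = μ}) := by
  have ha : a ∈ span R (Set.range ⇑D.basis) := by rw [D.basis.span_eq]; trivial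
  induction ha using Submodule.span_induction with
  | mem x hx =>
    obtain ⟨⟨l, s, t⟩, rfl⟩ := hx
    rw [D.basis_eq]
    by_cases h : mfun hA l t = μ
    · have h2 : D.c l s t * e μ = D.c l s t := by
        rw [← h]; exact (mfun_mem hA l t).1 s
      rw [h2]
      exact subset_span ⟨⟨l, (s, t)⟩, h, D.basis_eq l s t⟩
    · have h0 : D.c l s t * e μ = 0 := by
        have h1 : D.c l s t * e (mfun hA l t) = D.c l s t := (mfun_mem hA l t).1 s
        calc D.c l s t * e μ = (D.c l s t * e (mfun hA l t)) * e μ := by rw [h1]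
        _ = D.c l s t * (e (mfun hA l t) * e μ) := by rw [mul_assoc]
        _ = 0 := by rw [hA.orth _ _ (fun hh => h hh), mul_zero]
      rw [h0]; exact zero_mem _
  | zero => rw [zero_mul]; exact zero_mem _
  | add x y _ _ hx hy => rw [add_mul]; exact add_mem hx hy
  | smul r x _ hx => rw [smul_mul_assoc]; exact smul_mem _ _ hx

lemma levi_eq :
    D.levi e ι κ α = span R (⇑D.basis ''
      {i : Idx Λp T | ∃ ε, i.2.1 ∈ D.Iset e ι κ α i.1 ε ∧ i.2.2 ∈ D.Iset e ι κ α i.1 ε}) := by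
  unfold CellDatum.levi
  congr 1
  ext x
  constructor
  · rintro ⟨l, ε, s, t, hs, ht, rfl⟩
    exact ⟨⟨l, (s, t)⟩, ⟨ε, hs, ht⟩, D.basis_eq l s t⟩
  · rintro ⟨⟨l, s, t⟩, ⟨ε, hs, ht⟩, rfl⟩
    exact ⟨l, ε, s, t, hs, ht, D.basis_eq l s t⟩

lemma prod_mem [Nontrivial R] (hA : D.IdemData ι κ e) (hα : Monotone α)
    {l1 l2 : Λp} {ε1 ε2 : Bool} {s t : T l1} {s' t' : T l2}
    (hs : s ∈ D.Iset e ι κ α l1 ε1) (ht : t ∈ D.Iset e ι κ α l1 ε1)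
    (hs' : s' ∈ D.Iset e ι κ α l2 ε2) (ht' : t' ∈ D.Iset e ι κ α l2 ε2) :
    D.c l1 s t * D.c l2 s' t' ∈ D.levi e ι κ α := by
  by_cases hμ : mfun hA l1 t = mfun hA l2 s'
  case neg =>
    have h0 : D.c l1 s t * D.c l2 s' t' = 0 := by
      conv_lhs => rw [← (mfun_mem hA l1 t).1 s, ← (mfun_mem hA l2 s').2 t']
      rw [mul_assoc, ← mul_assoc (e (mfun hA l1 t)), hA.orth _ _ hμ, zero_mul, mul_zero]
    rw [h0]; exact zero_mem _
  case pos =>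
    have hL : D.c l1 s t * D.c l2 s' t' ∈
        span R (⇑D.basis '' {i : Idx Λp T | mfun hA i.1 i.2.1 = mfun hA l1 s}) := by
      have h := mul_e_left hA (mfun hA l1 s) (D.c l1 s t * D.c l2 s' t')
      rwa [← mul_assoc, (mfun_mem hA l1 s).2 t] at h
    have hR : D.c l1 s t * D.c l2 s' t' ∈
        span R (⇑D.basis '' {i : Idx Λp T | mfun hA i.1 i.2.2 = mfun hA l2 t'}) := by
      have h := mul_e_right hA (mfun hA l2 t') (D.c l1 s t * D.c l2 s' t')
      rwa [mul_assoc, (mfun_mem hA l2 t').1 s'] at h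
    have hI1 : D.c l1 s t * D.c l2 s' t' ∈ D.cellSpan {l' | l1 ≤ l'} :=
      cellSpan_mul_right _ (fun a b h1 h2 => le_trans h1 h2)
        (subset_span ⟨l1, s, t, le_refl l1, rfl⟩) _
    have hI2 : D.c l1 s t * D.c l2 s' t' ∈ D.cellSpan {l' | l2 ≤ l'} :=
      cellSpan_mul_left _ (fun a b h1 h2 => le_trans h1 h2)
        (subset_span ⟨l2, s', t', le_refl l2, rfl⟩) _
    rw [cellSpan_eq] at hI1 hI2
    rw [levi_eq]
    apply D.basis.mem_span_image.2
    intro i hi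
    have h1 := D.basis.mem_span_image.1 hL hi
    have h2 := D.basis.mem_span_image.1 hR hi
    have h3 : l1 ≤ i.1 := D.basis.mem_span_image.1 hI1 hi
    have h4 : l2 ≤ i.1 := D.basis.mem_span_image.1 hI2 hi
    have hL1 : α (ι l1) ≤ α (ι i.1) := hα ((hA.order_iff _ _).2 h3)
    have hL2 : α (ι l2) ≤ α (ι i.1) := hα ((hA.order_iff _ _).2 h4)
    obtain ⟨L, x, y⟩ := i
    have hrow : mfun hA L x = mfun hA l1 s := h1
    have hcol : mfun hA L y = mfun hA l2 t' := h2
    show ∃ ε, x ∈ D.Iset e ι κ α L ε ∧ y ∈ D.Iset e ι κ α L ε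
    apply same_eps hA hα
    rw [hrow, hcol]
    have hκ : α (κ (mfun hA l1 t)) = α (κ (mfun hA l2 s')) := by rw [hμ]
    cases ε1 with
    | false =>
      rw [iset_false, mem_Tplus_iff hA] at hs ht
      cases ε2 with
      | false =>
        rw [iset_false, mem_Tplus_iff hA] at hs' ht'
        left
        rw [← hs, ht, hκ, ← hs', ht']
      | true =>
        rw [iset_true, mem_Tminus_iff hA] at hs' ht'
        right
        constructor
        · have h : α (κ (mfun hA l1 s)) < α (ι l2) := by rw [← hs, ht, hκ]; exact hs'
          exact h.trans_le hL2
        · exact ht'.trans_le hL2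
    | true =>
      rw [iset_true, mem_Tminus_iff hA] at hs ht
      cases ε2 with
      | false =>
        rw [iset_false, mem_Tplus_iff hA] at hs' ht'
        refine Or.inr ⟨hs.trans_le hL1, ?_⟩
        have h : α (κ (mfun hA l2 t')) < α (ι l1) := by rw [← ht', hs', ← hκ]; exact ht
        exact h.trans_le hL1
      | true =>
        rw [iset_true, mem_Tminus_iff hA] at hs' ht'
        exact Or.inr ⟨hs.trans_le hL1, ht'.trans_le hL2⟩

lemma levi_mul [Nontrivial R] (hA : D.IdemData ι κ e) (hα : Monotone α)
    {x y : A} (hx : x ∈ D.levi e ι κ α) (hy : y ∈ D.levi e ι κ α) :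
    x * y ∈ D.levi e ι κ α := by
  have key : D.levi e ι κ α * D.levi e ι κ α ≤ D.levi e ι κ α := by
    unfold CellDatum.levi
    rw [Submodule.span_mul_span]
    apply Submodule.span_le.2
    rintro z ⟨x, hx, y, hy, rfl⟩
    obtain ⟨l1, ε1, s, t, hs, ht, rfl⟩ := hx
    obtain ⟨l2, ε2, s', t', hs', ht', rfl⟩ := hy
    exact prod_mem hA hα hs ht hs' ht'
  exact key (Submodule.mul_mem_mul hx hy)

lemma e_mem [Nontrivial R] (hA : D.IdemData ι κ e) (hα : Monotone α) (μ : M) :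
    e μ ∈ D.levi e ι κ α := by
  have h1 : e μ ∈ span R (⇑D.basis '' {i : Idx Λp T | mfun hA i.1 i.2.1 = μ}) := by
    have h := mul_e_left hA μ (e μ)
    rwa [hA.idem μ] at h
  have h2 : e μ ∈ span R (⇑D.basis '' {i : Idx Λp T | mfun hA i.1 i.2.2 = μ}) := by
    have h := mul_e_right hA μ (e μ)
    rwa [hA.idem μ] at h
  rw [levi_eq]
  apply D.basis.mem_span_image.2
  intro i hi
  have hrow := D.basis.mem_span_image.1 h1 hi
  have hcol := D.basis.mem_span_image.1 h2 hi
  obtain ⟨L, x, y⟩ := i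
  show ∃ ε, x ∈ D.Iset e ι κ α L ε ∧ y ∈ D.Iset e ι κ α L ε
  apply same_eps hA hα
  left
  show α (κ (mfun hA L x)) = α (κ (mfun hA L y))
  rw [show mfun hA L x = μ from hrow, show mfun hA L y = μ from hcol]

lemma one_mem_levi [Nontrivial R] (hA : D.IdemData ι κ e) (hα : Monotone α) :
    (1 : A) ∈ D.levi e ι κ α := by
  rw [← hA.sum_one]; exact sum_mem fun μ _ => e_mem hA hα μ

lemma star_levi {x : A} (hx : x ∈ D.levi e ι κ α) : D.star x ∈ D.levi e ι κ α := by
  induction hx using Submodule.span_induction with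
  | mem x hx =>
    obtain ⟨l, ε, s, t, hs, ht, rfl⟩ := hx
    rw [D.star_c]; exact subset_span ⟨l, ε, t, s, ht, hs, rfl⟩
  | zero => rw [map_zero]; exact zero_mem _
  | add x y _ _ hx hy => rw [map_add]; exact add_mem hx hy
  | smul r x _ hx => rw [map_smul]; exact smul_mem _ _ hx

lemma sigma_eq_iff {l : Λp} {t w v : T l} :
    (⟨l, (t, w)⟩ : Idx Λp T) = ⟨l, (t, v)⟩ ↔ w = v := by
  constructor
  · intro h; simpa using h
  · rintro rfl; rfl

lemma repr_coeff [Nontrivial R] {l : Λp} (t : T l) (a : A) (v : T l) :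
    D.basis.repr (D.c l t t * a) ⟨l, (t, v)⟩ = D.coeff l t a v := by
  classical
  set z := D.c l t t * a - ∑ w, D.coeff l t a w • D.c l t w with hzdef
  have hz : z ∈ D.Aup l := D.mul_rule l t t a
  have hsum : D.c l t t * a = (∑ w, D.coeff l t a w • D.c l t w) + z := by
    rw [hzdef]; abel
  rw [hsum, map_add, Finsupp.add_apply]
  have h1 : D.basis.repr (∑ w, D.coeff l t a w • D.c l t w) ⟨l, (t, v)⟩
      = D.coeff l t a v := by
    rw [map_sum, Finsupp.finset_sum_apply]
    have hterm : ∀ w, D.basis.repr (D.coeff l t a w • D.c l t w) ⟨l, (t, v)⟩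
        = if w = v then D.coeff l t a w else 0 := by
      intro w
      rw [map_smul, ← D.basis_eq, D.basis.repr_self, Finsupp.smul_apply,
        Finsupp.single_apply]
      by_cases h : w = v
      · subst h; rw [if_pos rfl, if_pos rfl, smul_eq_mul, mul_one]
      · rw [if_neg (fun hh => h (sigma_eq_iff.1 hh)), if_neg h, smul_eq_mul, mul_zero]
    rw [Finset.sum_congr rfl fun w _ => hterm w]
    simp
  have h2 : D.basis.repr z ⟨l, (t, v)⟩ = 0 := by
    rw [Aup_eq_cellSpan, cellSpan_eq] at hz
    have hsub := D.basis.mem_span_image.1 hz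
    by_contra hne
    have hlt : (⟨l, (t, v)⟩ : Idx Λp T) ∈ {i : Idx Λp T | l < i.1} :=
      hsub (Finsupp.mem_support_iff.2 hne)
    exact lt_irrefl l hlt
  rw [h1, h2, add_zero]

lemma coeff_support [Nontrivial R] (hA : D.IdemData ι κ e) (hα : Monotone α)
    {l : Λp} {ε : Bool} {t : T l} (ht : t ∈ D.Iset e ι κ α l ε)
    {a : A} (ha : a ∈ D.levi e ι κ α) (v : T l) (hv : D.coeff l t a v ≠ 0) :
    v ∈ D.Iset e ι κ α l ε := by
  have hP : D.c l t t * a ∈ D.levi e ι κ α :=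
    levi_mul hA hα (subset_span ⟨l, ε, t, t, ht, ht, rfl⟩) ha
  rw [levi_eq] at hP
  have hsupp := D.basis.mem_span_image.1 hP
  have hmem : (⟨l, (t, v)⟩ : Idx Λp T) ∈ (D.basis.repr (D.c l t t * a)).support :=
    Finsupp.mem_support_iff.2 (by rw [repr_coeff t a v]; exact hv)
  obtain ⟨ε'', h1, h2⟩ := hsupp hmem
  rwa [← eps_unique hA ht h1] at h2

lemma conj5 [Nontrivial R] (hA : D.IdemData ι κ e) (hα : Monotone α)
    {l : Λp} {ε : Bool} {t : T l} (ht : t ∈ D.Iset e ι κ α l ε)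
    {a : A} (ha : a ∈ D.levi e ι κ α) {s : T l} (hs : s ∈ D.Iset e ι κ α l ε) :
    D.c l s t * a - ∑ v, D.coeff l t a v • D.c l s v ∈ D.upperOm e ι κ α (l, ε) := by
  have hz : D.c l s t * a - ∑ v, D.coeff l t a v • D.c l s v ∈ D.Aup l := D.mul_rule l s t a
  have hP : D.c l s t * a ∈ D.levi e ι κ α :=
    levi_mul hA hα (subset_span ⟨l, ε, s, t, hs, ht, rfl⟩) ha
  have hProw : D.c l s t * a ∈
      span R (⇑D.basis '' {i : Idx Λp T | mfun hA i.1 i.2.1 = mfun hA l s}) := by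
    have h := mul_e_left hA (mfun hA l s) (D.c l s t * a)
    rwa [← mul_assoc, (mfun_mem hA l s).2 t] at h
  rw [levi_eq] at hP
  have hQ : (∑ v, D.coeff l t a v • D.c l s v) ∈
      span R (⇑D.basis '' {i : Idx Λp T | i.1 = l}) :=
    sum_mem fun v _ => smul_mem _ _ (subset_span ⟨⟨l, (s, v)⟩, rfl, D.basis_eq l s v⟩)
  have hmem : D.c l s t * a - ∑ v, D.coeff l t a v • D.c l s v ∈ span R (⇑D.basis ''
      ({i : Idx Λp T | l < i.1} ∩
        ({i : Idx Λp T | ∃ ε'', i.2.1 ∈ D.Iset e ι κ α i.1 ε'' ∧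
            i.2.2 ∈ D.Iset e ι κ α i.1 ε''} ∩
          {i : Idx Λp T | mfun hA i.1 i.2.1 = mfun hA l s}))) := by
    apply D.basis.mem_span_image.2
    intro i hi
    rw [Aup_eq_cellSpan, cellSpan_eq] at hz
    have hlt : l < i.1 := D.basis.mem_span_image.1 hz hi
    have hQ0 : D.basis.repr (∑ v, D.coeff l t a v • D.c l s v) i = 0 := by
      refine Finsupp.notMem_support_iff.1 fun hcon => ?_
      have hil : i.1 = l := D.basis.mem_span_image.1 hQ hcon
      exact (ne_of_lt hlt) hil.symm
    have hPne : D.basis.repr (D.c l s t * a) i ≠ 0 := by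
      intro h0
      have hzz : D.basis.repr (D.c l s t * a - ∑ v, D.coeff l t a v • D.c l s v) i = 0 := by
        rw [map_sub, Finsupp.sub_apply, h0, hQ0, sub_zero]
      exact Finsupp.mem_support_iff.1 hi hzz
    have hPsupp : i ∈ (D.basis.repr (D.c l s t * a)).support :=
      Finsupp.mem_support_iff.2 hPne
    exact ⟨hlt, D.basis.mem_span_image.1 hP hPsupp, D.basis.mem_span_image.1 hProw hPsupp⟩
  refine Submodule.span_le.2 ?_ hmem
  rintro x ⟨⟨L, xx, yy⟩, ⟨hlt, ⟨ε'', hx, hy⟩, hrow⟩, rfl⟩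
  have hord : (((l, ε).2 : Bool) < (L, ε'').2) ∨
      ((l, ε).2 = (L, ε'').2 ∧ (l, ε).1 < (L, ε'').1) := by
    by_cases hee : ε = ε''
    · exact Or.inr ⟨hee, hlt⟩
    · cases ε with
      | false =>
        cases ε'' with
        | false => exact absurd rfl hee
        | true => exact Or.inl (show (false : Bool) < true by decide)
      | true =>
        cases ε'' with
        | true => exact absurd rfl hee
        | false =>
          exfalso
          rw [iset_true, mem_Tminus_iff hA] at hs
          have hx' : xx ∈ D.Tplus e ι κ α L := hx
          rw [mem_Tplus_iff hA] at hx'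
          have hlt' : l < L := hlt
          have h1 : α (ι l) ≤ α (ι L) := hα ((hA.order_iff _ _).2 hlt'.le)
          have hrow' : mfun hA L xx = mfun hA l s := hrow
          rw [hrow'] at hx'
          exact (hs.trans_le h1).ne hx'.symm
  exact subset_span ⟨(L, ε''), xx, yy, hord, hx, hy, D.basis_eq L xx yy⟩

end StmtAux


/-- for an order-preserving map `α : Λ̃ → X`, the span `A^α` of the
`c^λ_{st}` with `s,t` both in `T⁺_α(λ)` or both in `T⁻_α(λ)` is a subalgebra of `A`
containing `1_A`, stable under `*`, and it is a cellular algebra with cellular basis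
`Z^α` with respect to the poset `Ω` (ordered by `(λ,ε) > (λ',ε')` iff `ε > ε'`, or
`ε = ε'` and `λ > λ'`). -/
theorem stmt_8
    {R A : Type u} [CommRing R] [Ring A] [Algebra R A]
    {Λp : Type u} [PartialOrder Λp] [Fintype Λp]
    {T : Λp → Type u} [∀ l, Fintype (T l)]
    {Λt M X : Type u} [PartialOrder Λt] [PartialOrder X] [Fintype M]
    (D : CellDatum R A Λp T)
    (ι : Λp → Λt) (κ : M → Λt) (e : M → A)
    (hA : D.IdemData ι κ e)
    (α : Λt → X) (hα : Monotone α) :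
    (1 : A) ∈ D.levi e ι κ α ∧
    (∀ x y : A, x ∈ D.levi e ι κ α → y ∈ D.levi e ι κ α → x * y ∈ D.levi e ι κ α) ∧
    (∀ x : A, x ∈ D.levi e ι κ α → D.star x ∈ D.levi e ι κ α) ∧
    (∃ bb : Module.Basis {p : (l : Λp) × (T l × T l) //
        ∃ ε, p.2.1 ∈ D.Iset e ι κ α p.1 ε ∧ p.2.2 ∈ D.Iset e ι κ α p.1 ε}
        R ↥(D.levi e ι κ α),
      ∀ p, (bb p : A) = D.c p.1.1 p.1.2.1 p.1.2.2) ∧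
    (∀ (l : Λp) (ε : Bool) (t : T l), t ∈ D.Iset e ι κ α l ε →
      ∀ a ∈ D.levi e ι κ α, ∃ r : T l → R,
        (∀ v, r v ≠ 0 → v ∈ D.Iset e ι κ α l ε) ∧
        ∀ s ∈ D.Iset e ι κ α l ε,
          D.c l s t * a - ∑ v, r v • D.c l s v ∈ D.upperOm e ι κ α (l, ε)) := by
  rcases subsingleton_or_nontrivial R with hR | hR
  · haveI : Subsingleton A := Module.subsingleton R A
    haveI hFS : Subsingleton ({p : (l : Λp) × (T l × T l) //
        ∃ ε, p.2.1 ∈ D.Iset e ι κ α p.1 ε ∧ p.2.2 ∈ D.Iset e ι κ α p.1 ε} →₀ R) :=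
      ⟨fun f g => Finsupp.ext fun i => Subsingleton.elim _ _⟩
    refine ⟨?_, ?_, ?_, ?_, ?_⟩
    · rw [Subsingleton.elim (1 : A) 0]; exact zero_mem _
    · intro x y _ _; rw [Subsingleton.elim (x * y) 0]; exact zero_mem _
    · intro x _; rw [Subsingleton.elim (D.star x) 0]; exact zero_mem _
    · refine ⟨Module.Basis.ofRepr
        { toFun := fun _ => 0
          invFun := fun _ => 0
          map_add' := fun _ _ => Subsingleton.elim _ _
          map_smul' := fun _ _ => Subsingleton.elim _ _
          left_inv := fun _ => Subsingleton.elim _ _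
          right_inv := fun _ => Subsingleton.elim _ _ }, fun p => Subsingleton.elim _ _⟩
    · intro l ε t ht a ha
      refine ⟨0, fun v hv => absurd rfl hv, fun s hs => ?_⟩
      rw [Subsingleton.elim (D.c l s t * a - ∑ v, (0 : T l → R) v • D.c l s v) 0]
      exact zero_mem _
  · refine ⟨StmtAux.one_mem_levi hA hα, fun x y hx hy => StmtAux.levi_mul hA hα hx hy,
      fun x hx => StmtAux.star_levi hx, ?_, ?_⟩
    · have li : LinearIndependent R (fun p : {p : (l : Λp) × (T l × T l) //
          ∃ ε, p.2.1 ∈ D.Iset e ι κ α p.1 ε ∧ p.2.2 ∈ D.Iset e ι κ α p.1 ε} =>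
          D.basis p.val) :=
        D.basis.linearIndependent.comp Subtype.val Subtype.val_injective
      have hsp : Submodule.span R (Set.range fun p : {p : (l : Λp) × (T l × T l) //
          ∃ ε, p.2.1 ∈ D.Iset e ι κ α p.1 ε ∧ p.2.2 ∈ D.Iset e ι κ α p.1 ε} =>
          D.basis p.val) = D.levi e ι κ α := by
        rw [StmtAux.levi_eq]
        congr 1
        rw [show (fun p : {p : (l : Λp) × (T l × T l) //
            ∃ ε, p.2.1 ∈ D.Iset e ι κ α p.1 ε ∧ p.2.2 ∈ D.Iset e ι κ α p.1 ε} =>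
            D.basis p.val) = ⇑D.basis ∘ Subtype.val from rfl, Set.range_comp,
          Subtype.range_coe_subtype]
      refine ⟨(Module.Basis.span li).map (LinearEquiv.ofEq _ _ hsp), fun p => ?_⟩
      rw [Module.Basis.map_apply, LinearEquiv.coe_ofEq_apply, Module.Basis.span_apply]
      exact D.basis_eq p.1.1 p.1.2.1 p.1.2.2
    · intro l ε t ht a ha
      exact ⟨D.coeff l t a, fun v hv => StmtAux.coeff_support hA hα ht ha v hv,
        fun s hs => StmtAux.conj5 hA hα ht ha hs⟩
end
end
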